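/- arXiv:1402.2903 — 9 statements merged into one kernel-verified Lean document; each statement's English description precedes it below -/
import Mathlib

section
/- In a König-Egerváry graph G, every maximum matching M is contained in the edge set (S, V(G) - S) for every maximum independent set S, and |M| = |V(G) - S|. -/
open SimpleGraph

attribute [local instance] Classical.propDecidable

variable {V : Type*}

/-- A set of vertices is independent if no two of its members are adjacent. -/
def IsIndepSet (G : SimpleGraph V) (s : Set V) : Prop :=
  ∀ ⦃a⦄, a ∈ s → ∀ ⦃b⦄, b ∈ s → ¬ G.Adj a b

/-- The independence number α(G). -/
noncomputable def indepNum (G : SimpleGraph V) [Fintype V] : ℕ :=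
  sSup {n | ∃ s : Finset V, _root_.IsIndepSet G ↑s ∧ s.card = n}

/-- The matching number μ(G). -/
noncomputable def matchNum (G : SimpleGraph V) [Fintype V] : ℕ :=
  sSup {n | ∃ M : G.Subgraph, M.IsMatching ∧ M.edgeSet.ncard = n}

/-- A König-Egerváry graph: α(G) + μ(G) = |V(G)|. -/
def KonigEgervary (G : SimpleGraph V) [Fintype V] : Prop :=
  _root_.indepNum G + matchNum G = Fintype.card V

/-- A maximum independent set. -/
def IsMaxIndepSet (G : SimpleGraph V) [Fintype V] (s : Finset V) : Prop :=
  _root_.IsIndepSet G ↑s ∧ s.card = _root_.indepNum G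

/-- A maximum matching. -/
def IsMaximumMatching (G : SimpleGraph V) [Fintype V] (M : G.Subgraph) : Prop :=
  M.IsMatching ∧ M.edgeSet.ncard = matchNum G

/-- A leaf: a vertex with exactly one neighbour. -/
def IsLeaf (G : SimpleGraph V) (v : V) : Prop := ∃! u, G.Adj v u

/-- A cycle `p` is `M`-alternating if of every two distinct incident edges of
the cycle exactly one belongs to `M`. -/
def IsAlternatingCycle (G : SimpleGraph V) (M : Set (Sym2 V)) {v : V} (p : G.Walk v v) : Prop :=
  p.IsCycle ∧ ∀ e f : Sym2 V, e ∈ p.edges → f ∈ p.edges → e ≠ f →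
    (∃ x, x ∈ e ∧ x ∈ f) → (e ∈ M ↔ f ∉ M)

/-- `G` contains an `M`-alternating cycle. -/
def HasAlternatingCycle (G : SimpleGraph V) (M : Set (Sym2 V)) : Prop :=
  ∃ (v : V) (p : G.Walk v v), IsAlternatingCycle G M p

/-- `G` is unicyclic: it has exactly one cycle (up to its edge set). -/
def UniqueCycle (G : SimpleGraph V) : Prop :=
  ∃! c : Set (Sym2 V), ∃ (v : V) (p : G.Walk v v), p.IsCycle ∧ c = {e | e ∈ p.edges}

/-- The core of `G`: the intersection of all maximum independent sets. -/
def core (G : SimpleGraph V) [Fintype V] : Set V :=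
  {v | ∀ s : Finset V, IsMaxIndepSet G s → v ∈ s}

theorem stmt0 (G : SimpleGraph V) [Fintype V] (hKE : KonigEgervary G)
    (M : G.Subgraph) (hM : IsMaximumMatching G M)
    (S : Finset V) (hS : IsMaxIndepSet G S) :
    (∀ e ∈ M.edgeSet, ∃ a b, e = s(a, b) ∧ a ∈ S ∧ b ∉ S) ∧
      M.edgeSet.ncard = Fintype.card V - S.card := by
  classical
  obtain ⟨hMm, hMc⟩ := hM
  obtain ⟨hSi, hSc⟩ := hS
  have huniq : ∀ {a b c : V}, M.Adj a b → M.Adj a c → b = c := by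
    intro a b c hab hac
    exact (hMm (M.edge_vert hab)).unique hab hac
  have hedge : ∀ {e e' : Sym2 V} {v : V}, e ∈ M.edgeSet → e' ∈ M.edgeSet →
      v ∈ e → v ∈ e' → e = e' := by
    intro e e' v he he' hv hv'
    obtain ⟨w, rfl⟩ := Sym2.mem_iff_exists.mp hv
    obtain ⟨w', rfl⟩ := Sym2.mem_iff_exists.mp hv'
    rw [SimpleGraph.Subgraph.mem_edgeSet] at he he'
    rw [huniq he he']
  have hScard : S.card ≤ Fintype.card V := S.card_le_card (Finset.subset_univ S) |>.trans
    (by simp)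
  have hcard2 : M.edgeSet.ncard = Fintype.card V - S.card := by
    rw [hMc]
    unfold KonigEgervary at hKE
    omega
  refine ⟨?_, hcard2⟩
  intro e he
  induction e using Sym2.ind with
  | _ a b =>
    have he' := he
    rw [SimpleGraph.Subgraph.mem_edgeSet] at he'
    have hG : G.Adj a b := M.adj_sub he'
    by_cases ha : a ∈ S
    · refine ⟨a, b, rfl, ha, fun hb => ?_⟩
      exact hSi (Finset.mem_coe.mpr ha) (Finset.mem_coe.mpr hb) hG
    by_cases hb : b ∈ S
    · exact ⟨b, a, Sym2.eq_swap, hb, ha⟩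
    exfalso
    set f : Sym2 V → V := fun e => if h : ∃ v, v ∈ e ∧ v ∉ S then h.choose else a with hf
    have hfspec : ∀ e ∈ M.edgeSet, f e ∈ e ∧ f e ∉ S := by
      intro e' he'
      have hex : ∃ v, v ∈ e' ∧ v ∉ S := by
        induction e' using Sym2.ind with
        | _ x y =>
          rw [SimpleGraph.Subgraph.mem_edgeSet] at he'
          by_cases hx : x ∈ S
          · refine ⟨y, Sym2.mem_mk_right x y, fun hy => ?_⟩
            exact hSi (Finset.mem_coe.mpr hx) (Finset.mem_coe.mpr hy) (M.adj_sub he')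
          · exact ⟨x, Sym2.mem_mk_left x y, hx⟩
      simp only [hf, dif_pos hex]
      exact hex.choose_spec
    have hinj : Set.InjOn f M.edgeSet := by
      intro e1 h1 e2 h2 hfe
      exact hedge h1 h2 (hfspec e1 h1).1 (hfe ▸ (hfspec e2 h2).1)
    set c : V := if f s(a, b) = a then b else a with hc
    have hcmem : c ∈ s(a, b) := by
      by_cases h : f s(a, b) = a <;> simp [hc, h]
    have hcS : c ∉ S := by
      by_cases h : f s(a, b) = a <;> simp only [hc, h, if_true, if_false] <;> assumption
    have hcne : c ≠ f s(a, b) := by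
      have hab : a ≠ b := hG.ne
      have hfab := (hfspec s(a, b) he).1
      rw [Sym2.mem_iff] at hfab
      by_cases h : f s(a, b) = a
      · simp only [hc, h, if_true]
        exact fun hh => hab hh.symm
      · have : f s(a, b) = b := hfab.resolve_left h
        simp only [hc, h, if_false]
        rw [this]
        exact hab
    have hcnotim : c ∉ f '' M.edgeSet := by
      rintro ⟨e', he'', hfe⟩
      have hcm' : c ∈ e' := hfe ▸ (hfspec e' he'').1
      have : e' = s(a, b) := hedge he'' he hcm' hcmem
      exact hcne (by rw [← hfe, this])
    have hsub : insert c (f '' M.edgeSet) ⊆ (↑S : Set V)ᶜ := by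
      rintro x hx
      rcases Set.mem_insert_iff.mp hx with rfl | ⟨e', he'', rfl⟩
      · simpa using hcS
      · simpa using (hfspec e' he'').2
    have h1 : (f '' M.edgeSet).ncard = M.edgeSet.ncard :=
      Set.ncard_image_of_injOn hinj
    have h2 : (insert c (f '' M.edgeSet)).ncard = M.edgeSet.ncard + 1 := by
      rw [Set.ncard_insert_of_notMem hcnotim (Set.toFinite _), h1]
    have h3 : (insert c (f '' M.edgeSet)).ncard ≤ ((↑S : Set V)ᶜ).ncard :=
      Set.ncard_le_ncard hsub (Set.toFinite _)
    have h4 : (↑S : Set V).ncard + ((↑S : Set V)ᶜ).ncard = Nat.card V :=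
      Set.ncard_add_ncard_compl _
    rw [Set.ncard_coe_finset, Nat.card_eq_fintype_card] at h4
    omega
end

section
/- A matching M in a graph G is uniquely restricted if and only if G contains no M-alternating cycle. -/
open SimpleGraph

attribute [local instance] Classical.propDecidable

variable {V : Type*}

/-- In a path starting at `x`, there is at most one edge at `x`. -/
lemma aux_start_edge_unique {G : SimpleGraph V} {x a b c : V} {p : G.Walk x a}
    (hp : p.IsPath) (hb : s(x, b) ∈ p.edges) (hc : s(x, c) ∈ p.edges) : b = c := by
  cases p with
  | nil => simp at hb
  | @cons _ u _ h q =>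
    rw [Walk.edges_cons, List.mem_cons] at hb hc
    have hpath := (Walk.cons_isPath_iff h q).mp hp
    have key : ∀ d, s(x, d) = s(x, u) ∨ s(x, d) ∈ q.edges → d = u := by
      rintro d (h' | h')
      · exact Sym2.congr_right.mp h'
      · exact absurd (Walk.fst_mem_support_of_mem_edges q h') hpath.2
    rw [key b hb, key c hc]

/-- Every vertex on a cycle has exactly two incident cycle edges. -/
lemma aux_cycle_two_edges {G : SimpleGraph V} {v : V} {p : G.Walk v v} (hp : p.IsCycle)
    {x : V} (hx : x ∈ p.support) :
    ∃ y z, y ≠ z ∧ s(x, y) ∈ p.edges ∧ s(x, z) ∈ p.edges ∧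
      ∀ b, s(x, b) ∈ p.edges → b = y ∨ b = z := by
  have hrot := hp.rotate hx
  have hmem : ∀ e, e ∈ (p.rotate x hx).edges ↔ e ∈ p.edges := fun e => (p.rotate_edges x hx).mem_iff
  obtain ⟨u, hadj, r, hr⟩ := Walk.not_nil_iff.mp hrot.not_nil
  rw [hr] at hrot hmem
  rw [Walk.cons_isCycle_iff] at hrot
  obtain ⟨hpath, hnotmem⟩ := hrot
  have hrev : r.reverse.IsPath := hpath.reverse
  obtain ⟨z, hadjz, t, ht⟩ := (Walk.not_nil_iff (p := r.reverse)).mp (Walk.not_nil_of_ne (G.ne_of_adj hadj))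
  have hzmem : s(x, z) ∈ r.reverse.edges := by rw [ht]; simp
  have hzr : s(x, z) ∈ r.edges := by rwa [Walk.edges_reverse, List.mem_reverse] at hzmem
  refine ⟨u, z, ?_, ?_, ?_, ?_⟩
  · rintro rfl; exact hnotmem hzr
  · rw [← hmem]; simp
  · rw [← hmem]; simp [hzr]
  · intro b hb
    rw [← hmem, Walk.edges_cons, List.mem_cons] at hb
    rcases hb with hb | hb
    · exact Or.inl (Sym2.congr_right.mp hb)
    · refine Or.inr (aux_start_edge_unique hrev ?_ hzmem)
      rwa [Walk.edges_reverse, List.mem_reverse]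

/-- A finite graph in which every non-isolated vertex has a second neighbour contains a cycle. -/
lemma aux_exists_cycle [Fintype V] {D : SimpleGraph V}
    (H2 : ∀ ⦃x y⦄, D.Adj x y → ∃ c, c ≠ y ∧ D.Adj x c) {x y : V} (hxy : D.Adj x y) :
    ∃ (u : V) (c : D.Walk u u), c.IsCycle := by
  suffices h : ∀ n {a b : V} (p : D.Walk b a), p.IsPath → ¬p.Nil →
      Fintype.card V ≤ n + p.support.length → ∃ (u : V) (c : D.Walk u u), c.IsCycle by
    refine h (Fintype.card V) (Walk.cons hxy Walk.nil) (by simp [hxy.ne]) (by simp) ?_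
    exact Nat.le_add_right _ _
  intro n
  induction n with
  | zero =>
    intro a b p hp hnn hlen
    obtain ⟨u, hadj, r, hr⟩ := Walk.not_nil_iff.mp hnn
    obtain ⟨c, hcu, hbc⟩ := H2 hadj
    by_cases hcs : c ∈ p.support
    · refine ⟨c, Walk.cons hbc.symm (p.takeUntil c hcs), ?_⟩
      rw [Walk.cons_isCycle_iff]
      refine ⟨hp.takeUntil hcs, fun he => ?_⟩
      have he' := p.edges_takeUntil_subset hcs he
      rw [hr, Walk.edges_cons, List.mem_cons] at he'
      rcases he' with he' | he'
      · rcases Sym2.eq_iff.mp he' with ⟨rfl, rfl⟩ | ⟨rfl, -⟩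
        · exact D.loopless.irrefl _ hbc
        · exact hcu rfl
      · have := Walk.snd_mem_support_of_mem_edges r he'
        rw [hr, Walk.cons_isPath_iff] at hp
        exact hp.2 this
    · exfalso
      have h1 : (c :: p.support).Nodup := List.nodup_cons.mpr ⟨hcs, hp.support_nodup⟩
      have h2 := h1.length_le_card
      simp only [List.length_cons] at h2
      omega
  | succ n ih =>
    intro a b p hp hnn hlen
    obtain ⟨u, hadj, r, hr⟩ := Walk.not_nil_iff.mp hnn
    obtain ⟨c, hcu, hbc⟩ := H2 hadj
    by_cases hcs : c ∈ p.support
    · refine ⟨c, Walk.cons hbc.symm (p.takeUntil c hcs), ?_⟩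
      rw [Walk.cons_isCycle_iff]
      refine ⟨hp.takeUntil hcs, fun he => ?_⟩
      have he' := p.edges_takeUntil_subset hcs he
      rw [hr, Walk.edges_cons, List.mem_cons] at he'
      rcases he' with he' | he'
      · rcases Sym2.eq_iff.mp he' with ⟨rfl, rfl⟩ | ⟨rfl, -⟩
        · exact D.loopless.irrefl _ hbc
        · exact hcu rfl
      · have := Walk.snd_mem_support_of_mem_edges r he'
        rw [hr, Walk.cons_isPath_iff] at hp
        exact hp.2 this
    · refine ih (Walk.cons hbc.symm p) ((Walk.cons_isPath_iff _ _).mpr ⟨hp, hcs⟩)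
        (by simp) ?_
      rw [Walk.support_cons, List.length_cons]
      omega

theorem stmt1 (G : SimpleGraph V) [Fintype V] (M : G.Subgraph) (hM : M.IsMatching) :
    (∀ M' : G.Subgraph, M'.IsMatching → M'.verts = M.verts → M' = M) ↔
      ¬ HasAlternatingCycle G M.edgeSet := by
  constructor
  · rintro huniq ⟨v, p, hcyc, halt⟩
    have hGadj : ∀ {a b : V}, s(a, b) ∈ p.edges → G.Adj a b := fun h => p.adj_of_mem_edges h
    have hxor : ∀ {x y z : V}, y ≠ z → s(x, y) ∈ p.edges → s(x, z) ∈ p.edges →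
        (s(x, y) ∈ M.edgeSet ↔ s(x, z) ∉ M.edgeSet) := by
      intro x y z hyz h1 h2
      refine halt _ _ h1 h2 ?_ ⟨x, by simp, by simp⟩
      intro h
      rcases Sym2.eq_iff.mp h with ⟨-, rfl⟩ | ⟨rfl, -⟩
      · exact hyz rfl
      · exact (hGadj h2).ne rfl
    have hsupp : ∀ x ∈ p.support, x ∈ M.verts ∧ ∃ y z, y ≠ z ∧
        s(x, y) ∈ p.edges ∧ s(x, z) ∈ p.edges ∧
        (∀ b, s(x, b) ∈ p.edges → b = y ∨ b = z) ∧ M.Adj x y ∧ ¬ M.Adj x z := by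
      intro x hx
      obtain ⟨y, z, hyz, h1, h2, hall⟩ := aux_cycle_two_edges hcyc hx
      by_cases hm : s(x, y) ∈ M.edgeSet
      · have hmy := Subgraph.mem_edgeSet.mp hm
        refine ⟨M.edge_vert hmy, y, z, hyz, h1, h2, hall, hmy, fun hc => ?_⟩
        exact (hxor hyz h1 h2).mp hm (Subgraph.mem_edgeSet.mpr hc)
      · have hm2 : s(x, z) ∈ M.edgeSet := by
          by_contra hc
          exact hm ((hxor hyz h1 h2).mpr hc)
        have hmz := Subgraph.mem_edgeSet.mp hm2
        exact ⟨M.edge_vert hmz, z, y, hyz.symm, h2, h1,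
          fun b hb => (hall b hb).symm, hmz, fun hc => hm (Subgraph.mem_edgeSet.mpr hc)⟩
    set M' : G.Subgraph :=
      { verts := M.verts
        Adj := fun a b => (M.Adj a b ∧ s(a, b) ∉ p.edges) ∨ (s(a, b) ∈ p.edges ∧ ¬ M.Adj a b)
        adj_sub := by rintro a b (⟨h, -⟩ | ⟨h, -⟩); exacts [M.adj_sub h, hGadj h]
        edge_vert := by
          rintro a b (⟨h, -⟩ | ⟨h, -⟩)
          · exact M.edge_vert h
          · exact (hsupp a (Walk.fst_mem_support_of_mem_edges p h)).1
        symm := by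
          refine ⟨?_⟩
          rintro a b (⟨h1, h2⟩ | ⟨h1, h2⟩)
          · exact Or.inl ⟨h1.symm, by rwa [Sym2.eq_swap]⟩
          · exact Or.inr ⟨by rwa [Sym2.eq_swap], fun h => h2 h.symm⟩ } with hM'def
    have hM'match : M'.IsMatching := by
      intro x hx
      by_cases hxs : x ∈ p.support
      · obtain ⟨-, y, z, hyz, h1, h2, hall, hmy, hmz⟩ := hsupp x hxs
        refine ⟨z, Or.inr ⟨h2, hmz⟩, ?_⟩
        rintro b (⟨hb1, hb2⟩ | ⟨hb1, hb2⟩)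
        · have hby : b = y := (hM hx).unique hb1 hmy
          exact absurd (hby ▸ h1) hb2
        · rcases hall b hb1 with rfl | rfl
          · exact absurd hmy hb2
          · rfl
      · obtain ⟨w, hw, hwu⟩ := hM hx
        refine ⟨w, Or.inl ⟨hw, fun hc => hxs (Walk.fst_mem_support_of_mem_edges p hc)⟩, ?_⟩
        rintro b (⟨hb1, -⟩ | ⟨hb1, -⟩)
        · exact hwu b hb1
        · exact absurd (Walk.fst_mem_support_of_mem_edges p hb1) hxs
    have hEq := huniq M' hM'match rfl
    obtain ⟨-, y, z, hyz, h1, h2, hall, hmy, hmz⟩ := hsupp v p.start_mem_support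
    have hadj' : M'.Adj v y := by rw [hEq]; exact hmy
    rcases hadj' with ⟨-, h⟩ | ⟨-, h⟩
    · exact h h1
    · exact h hmy
  · intro hno M' hM' hverts
    by_contra hne
    have hAdj : ∃ a b, (M.Adj a b ∧ ¬ M'.Adj a b) ∨ (M'.Adj a b ∧ ¬ M.Adj a b) := by
      by_contra hc
      push_neg at hc
      refine hne (Subgraph.ext hverts ?_)
      funext a b
      have := hc a b
      simp only [eq_iff_iff]
      tauto
    obtain ⟨x0, y0, hD0⟩ := hAdj
    let D : SimpleGraph V :=
      { Adj := fun a b => (M.Adj a b ∧ ¬ M'.Adj a b) ∨ (M'.Adj a b ∧ ¬ M.Adj a b)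
        symm := by
          refine ⟨?_⟩
          rintro a b (⟨h1, h2⟩ | ⟨h1, h2⟩)
          · exact Or.inl ⟨h1.symm, fun h => h2 h.symm⟩
          · exact Or.inr ⟨h1.symm, fun h => h2 h.symm⟩
        loopless := by
          refine ⟨?_⟩
          rintro a (⟨h, -⟩ | ⟨h, -⟩)
          · exact G.loopless.irrefl a (M.adj_sub h)
          · exact G.loopless.irrefl a (M'.adj_sub h) }
    have key : ∀ ⦃u w : V⦄, D.Adj u w → ∃ y z, M.Adj u y ∧ ¬ M'.Adj u y ∧ M'.Adj u z ∧
        ¬ M.Adj u z ∧ (∀ b, D.Adj u b → b = y ∨ b = z) := by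
      intro u w huw
      have hu : u ∈ M.verts := by
        rcases huw with ⟨h, -⟩ | ⟨h, -⟩
        · exact M.edge_vert h
        · exact hverts ▸ M'.edge_vert h
      obtain ⟨y, hy, hyu⟩ := hM hu
      obtain ⟨z, hz, hzu⟩ := hM' (hverts.symm ▸ hu)
      have hyz : y ≠ z := by
        rintro rfl
        rcases huw with ⟨h, h'⟩ | ⟨h, h'⟩
        · exact h' ((hyu w h) ▸ hz)
        · exact h' ((hzu w h) ▸ hy)
      refine ⟨y, z, hy, fun hc => hyz (hzu y hc), hz, fun hc => hyz ((hyu z hc).symm), ?_⟩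
      rintro b (⟨h, -⟩ | ⟨h, -⟩)
      · exact Or.inl (hyu b h)
      · exact Or.inr (hzu b h)
    have H2 : ∀ ⦃a b : V⦄, D.Adj a b → ∃ c, c ≠ b ∧ D.Adj a c := by
      intro a b hab
      obtain ⟨y, z, hy, hy', hz, hz', hall⟩ := key hab
      have hyz : y ≠ z := fun h => hz' (h ▸ hy)
      rcases hall b hab with rfl | rfl
      · exact ⟨z, hyz.symm, Or.inr ⟨hz, hz'⟩⟩
      · exact ⟨y, hyz, Or.inl ⟨hy, hy'⟩⟩
    obtain ⟨u, c, hc⟩ := aux_exists_cycle H2 (show D.Adj x0 y0 from hD0)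
    have hDG : D ≤ G := by
      rintro a b (⟨h, -⟩ | ⟨h, -⟩)
      · exact M.adj_sub h
      · exact M'.adj_sub h
    refine hno ⟨u, c.mapLe hDG, (Walk.mapLe_isCycle hDG).mpr hc, ?_⟩
    intro e f he hf hef hshare
    obtain ⟨x, hxe, hxf⟩ := hshare
    have hmap : ∀ g : Sym2 V, g ∈ (c.mapLe hDG).edges ↔ g ∈ c.edges := by
      intro g
      simp [Walk.mapLe, Walk.edges_map, Sym2.map_id', List.map_id]
    rw [hmap] at he hf
    obtain ⟨a, rfl⟩ := Sym2.mem_iff_exists.mp hxe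
    obtain ⟨b, rfl⟩ := Sym2.mem_iff_exists.mp hxf
    have hDa : D.Adj x a := c.adj_of_mem_edges he
    have hDb : D.Adj x b := c.adj_of_mem_edges hf
    have hab : a ≠ b := fun h => hef (by rw [h])
    obtain ⟨y, z, hy, hy', hz, hz', hall⟩ := key hDa
    rcases hall a hDa with rfl | rfl <;> rcases hall b hDb with rfl | rfl
    · exact absurd rfl hab
    · simp [Subgraph.mem_edgeSet, hy, hz']
    · simp [Subgraph.mem_edgeSet, hy, hz']
    · exact absurd rfl hab
end

section
/- If a graph G without isolated vertices has a unique maximum matching, then this matching is perfect. -/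
open SimpleGraph

attribute [local instance] Classical.propDecidable

variable {V : Type*}

theorem stmt2 (G : SimpleGraph V) [Fintype V] (hiso : ∀ v, ∃ u, G.Adj v u)
    (M : G.Subgraph) (hM : IsMaximumMatching G M)
    (huniq : ∀ M' : G.Subgraph, IsMaximumMatching G M' → M' = M) :
    M.IsPerfectMatching := by
  classical
  refine ⟨hM.1, ?_⟩
  intro v
  by_contra hv
  obtain ⟨u, hadj⟩ := hiso v
  have hbdd : BddAbove {n | ∃ N : G.Subgraph, N.IsMatching ∧ N.edgeSet.ncard = n} := by
    refine ⟨Fintype.card (Sym2 V), ?_⟩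
    rintro n ⟨N, _, rfl⟩
    calc N.edgeSet.ncard ≤ (Set.univ : Set (Sym2 V)).ncard :=
          Set.ncard_le_ncard (Set.subset_univ _) Set.finite_univ
      _ = Fintype.card (Sym2 V) := by simp [Set.ncard_univ]
  have hle : ∀ N : G.Subgraph, N.IsMatching → N.edgeSet.ncard ≤ matchNum G := fun N hN =>
    le_csSup hbdd ⟨N, hN, rfl⟩
  have hvu_ne : v ≠ u := hadj.ne
  by_cases hu : u ∈ M.verts
  · -- u is matched to some w; swap the edge uw for vu
    obtain ⟨w, huw, huniq'⟩ := hM.1 hu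
    have hwv : w ∈ M.verts := M.edge_vert huw.symm
    have hwuniq : ∀ y, M.Adj w y → y = u := by
      intro y hy
      obtain ⟨z, hz, hzuniq⟩ := hM.1 hwv
      rw [hzuniq y hy, hzuniq u huw.symm]
    have hvw : v ≠ w := fun h => hv (h ▸ hwv)
    set D := M.deleteVerts {u, w} with hD
    have hDmatch : D.IsMatching := by
      intro x hx
      rw [SimpleGraph.Subgraph.deleteVerts_verts] at hx
      obtain ⟨hxM, hxs⟩ := hx
      obtain ⟨y, hy, hyuniq⟩ := hM.1 hxM
      have hyM : y ∈ M.verts := M.edge_vert hy.symm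
      have hxu : x ≠ u := fun h => hxs (by simp [h])
      have hxw : x ≠ w := fun h => hxs (by simp [h])
      have hyu : y ≠ u := by
        intro h
        exact hxw (huniq' x (h ▸ hy).symm)
      have hyw : y ≠ w := by
        intro h
        exact hxu (hwuniq x (h ▸ hy).symm)
      refine ⟨y, ?_, ?_⟩
      · show D.Adj x y
        rw [hD, SimpleGraph.Subgraph.deleteVerts_adj]
        exact ⟨hxM, by simp [hxu, hxw], hyM, by simp [hyu, hyw], hy⟩
      · intro y' hy'
        have hy'' : (M.deleteVerts {u, w}).Adj x y' := hy'
        rw [SimpleGraph.Subgraph.deleteVerts_adj] at hy''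
        exact hyuniq y' hy''.2.2.2.2
    set N := D ⊔ G.subgraphOfAdj hadj with hN
    have hdisj : Disjoint D.support (G.subgraphOfAdj hadj).support := by
      refine Set.disjoint_left.mpr ?_
      intro x hx hx'
      have h1 : x ∈ D.verts := D.support_subset_verts hx
      have h2 : x ∈ (G.subgraphOfAdj hadj).verts :=
        (G.subgraphOfAdj hadj).support_subset_verts hx'
      rw [SimpleGraph.Subgraph.deleteVerts_verts] at h1
      simp only [SimpleGraph.subgraphOfAdj_verts, Set.mem_insert_iff,
        Set.mem_singleton_iff] at h2
      rcases h2 with rfl | rfl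
      · exact hv h1.1
      · exact h1.2 (by simp)
    have hNmatch : N.IsMatching :=
      hDmatch.sup (SimpleGraph.Subgraph.IsMatching.subgraphOfAdj hadj) hdisj
    have hDedge : D.edgeSet = M.edgeSet \ {s(u, w)} := by
      ext e
      induction e using Sym2.ind with
      | _ a b =>
        have hDadj : ∀ a b : V, D.Adj a b ↔ (a ∈ M.verts ∧ a ∉ ({u, w} : Set V) ∧
            b ∈ M.verts ∧ b ∉ ({u, w} : Set V) ∧ M.Adj a b) := fun a b =>
          SimpleGraph.Subgraph.deleteVerts_adj
        simp only [SimpleGraph.Subgraph.mem_edgeSet, Set.mem_diff,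
          Set.mem_singleton_iff, hDadj]
        constructor
        · rintro ⟨haM, has, hbM, hbs, hab⟩
          refine ⟨hab, ?_⟩
          intro h
          rw [Sym2.eq_iff] at h
          rcases h with ⟨rfl, rfl⟩ | ⟨rfl, rfl⟩
          · exact has (by simp)
          · exact has (by simp)
        · rintro ⟨hab, hne⟩
          have haM : a ∈ M.verts := M.edge_vert hab
          have hbM : b ∈ M.verts := M.edge_vert hab.symm
          have hau : a ≠ u := by
            rintro rfl
            exact hne (by rw [huniq' b hab])
          have haw : a ≠ w := by
            rintro rfl
            rw [hwuniq b hab, Sym2.eq_swap] at hne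
            exact hne rfl
          have hbu : b ≠ u := by
            rintro rfl
            rw [huniq' a hab.symm, Sym2.eq_swap] at hne
            exact hne rfl
          have hbw : b ≠ w := by
            rintro rfl
            exact hne (by rw [hwuniq a hab.symm])
          exact ⟨haM, by simp [hau, haw], hbM, by simp [hbu, hbw], hab⟩
    have hvuM : s(v, u) ∉ M.edgeSet := fun h => hv (M.edge_vert h)
    have hNedge : N.edgeSet = insert s(v, u) (M.edgeSet \ {s(u, w)}) := by
      rw [hN, SimpleGraph.Subgraph.edgeSet_sup, hDedge,
        SimpleGraph.edgeSet_subgraphOfAdj]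
      rw [Set.union_singleton]
    have hMfin : M.edgeSet.Finite := Set.toFinite _
    have huwM : s(u, w) ∈ M.edgeSet := huw
    have hcard : N.edgeSet.ncard = M.edgeSet.ncard := by
      rw [hNedge, Set.ncard_insert_of_notMem (by simp [hvuM]) (Set.toFinite _)]
      rw [Set.ncard_diff_singleton_add_one huwM hMfin]
    have hNmax : IsMaximumMatching G N := ⟨hNmatch, by rw [hcard]; exact hM.2⟩
    have := huniq N hNmax
    have hNadj : N.Adj v u := by
      rw [hN]
      exact SimpleGraph.Subgraph.sup_adj.mpr (Or.inr (by simp))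
    rw [this] at hNadj
    exact hv (M.edge_vert hNadj)
  · -- both v and u unmatched: add edge vu to get a bigger matching
    set N := M ⊔ G.subgraphOfAdj hadj with hN
    have hdisj : Disjoint M.support (G.subgraphOfAdj hadj).support := by
      refine Set.disjoint_left.mpr ?_
      intro x hx hx'
      have h1 : x ∈ M.verts := M.support_subset_verts hx
      have h2 : x ∈ (G.subgraphOfAdj hadj).verts :=
        (G.subgraphOfAdj hadj).support_subset_verts hx'
      simp only [SimpleGraph.subgraphOfAdj_verts, Set.mem_insert_iff,
        Set.mem_singleton_iff] at h2
      rcases h2 with rfl | rfl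
      · exact hv h1
      · exact hu h1
    have hNmatch : N.IsMatching :=
      hM.1.sup (SimpleGraph.Subgraph.IsMatching.subgraphOfAdj hadj) hdisj
    have hvuM : s(v, u) ∉ M.edgeSet := fun h => hv (M.edge_vert h)
    have hNedge : N.edgeSet = insert s(v, u) M.edgeSet := by
      rw [hN, SimpleGraph.Subgraph.edgeSet_sup, SimpleGraph.edgeSet_subgraphOfAdj,
        Set.union_singleton]
    have hMfin : M.edgeSet.Finite := Set.toFinite _
    have hcard : N.edgeSet.ncard = M.edgeSet.ncard + 1 := by
      rw [hNedge, Set.ncard_insert_of_notMem hvuM hMfin]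
    have := hle N hNmatch
    rw [hcard, hM.2] at this
    omega
end

section
/- If G = (A, B, E) is a bipartite graph with a unique perfect matching, then both parts A and B contain a leaf of G. -/
open SimpleGraph

attribute [local instance] Classical.propDecidable

variable {V : Type*}

private lemma key_no_leaf (G : SimpleGraph V) [Fintype V] [Nonempty V] (A B : Set V)
    (hdisj : Disjoint A B) (hcover : ∀ v, v ∈ A ∨ v ∈ B)
    (hbip : ∀ a b, G.Adj a b → (a ∈ A ∧ b ∈ B) ∨ (a ∈ B ∧ b ∈ A))
    (hupm : ∃! M : G.Subgraph, M.IsPerfectMatching)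
    (hno : ∀ a ∈ A, ¬ IsLeaf G a) : False := by
  classical
  obtain ⟨M, hM, huniq⟩ := hupm
  have hdis : ∀ v, v ∈ A → v ∈ B → False := fun v hA hB => Set.disjoint_left.mp hdisj hA hB
  have hex : ∀ v : V, ∃! w, M.Adj v w := fun v => hM.1 (hM.2 v)
  set f : V → V := fun v => (hex v).choose with hfdef
  have hf : ∀ v, M.Adj v (f v) := fun v => (hex v).choose_spec.1
  have hf' : ∀ v w, M.Adj v w → w = f v := fun v w h => (hex v).choose_spec.2 w h
  have hff : ∀ v, f (f v) = v := fun v => (hf' (f v) v (hf v).symm).symm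
  have hGf : ∀ v, G.Adj v (f v) := fun v => M.adj_sub (hf v)
  have hAB : ∀ v ∈ A, f v ∈ B := by
    intro v hv
    rcases hbip v (f v) (hGf v) with ⟨_, h⟩ | ⟨h, _⟩
    · exact h
    · exact (hdis v hv h).elim
  have hBA : ∀ v ∈ B, f v ∈ A := by
    intro v hv
    rcases hbip v (f v) (hGf v) with ⟨h, _⟩ | ⟨_, h⟩
    · exact (hdis v h hv).elim
    · exact h
  have hgex : ∀ a : V, ∃ u, a ∈ A → G.Adj a u ∧ u ≠ f a := by
    intro a
    by_cases hA : a ∈ A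
    · by_contra hcon
      push_neg at hcon
      exact hno a hA ⟨f a, hGf a, fun u hu => (hcon u).2 hu⟩
    · exact ⟨a, fun h => absurd h hA⟩
  set g : V → V := fun a => (hgex a).choose with hgdef
  have hg : ∀ a ∈ A, G.Adj a (g a) ∧ g a ≠ f a := fun a ha => (hgex a).choose_spec ha
  set φ : V → V := fun v => g (f v) with hφdef
  have hφ : ∀ v ∈ B, φ v ∈ B ∧ φ v ≠ v := by
    intro v hv
    have hfA := hBA v hv
    obtain ⟨hadj, hne⟩ := hg (f v) hfA
    refine ⟨?_, ?_⟩
    · rcases hbip (f v) (g (f v)) hadj with ⟨_, h⟩ | ⟨h, _⟩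
      · exact h
      · exact (hdis (f v) hfA h).elim
    · show g (f v) ≠ v
      rw [hff v] at hne
      exact hne
  obtain ⟨b0, hb0⟩ : ∃ v, v ∈ B := by
    obtain ⟨v⟩ := ‹Nonempty V›
    rcases hcover v with h | h
    · exact ⟨f v, hAB v h⟩
    · exact ⟨v, h⟩
  obtain ⟨m, n, hmn, heq⟩ : ∃ m n : ℕ, m < n ∧ φ^[m] b0 = φ^[n] b0 := by
    obtain ⟨m, n, hmn, heq⟩ := Finite.exists_ne_map_eq_of_infinite (fun n : ℕ => φ^[n] b0)
    rcases lt_or_gt_of_ne hmn with h | h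
    · exact ⟨m, n, h, heq⟩
    · exact ⟨n, m, h, heq.symm⟩
  have hiterB : ∀ (j : ℕ) (v : V), v ∈ B → φ^[j] v ∈ B := by
    intro j
    induction j with
    | zero => intro v hv; simpa using hv
    | succ p ih =>
        intro v hv
        rw [Function.iterate_succ_apply']
        exact (hφ _ (ih v hv)).1
  set x : V := φ^[m] b0 with hxdef
  have hxB : x ∈ B := hiterB m b0 hb0
  have hxiter : ∀ j, φ^[j] x ∈ B := fun j => hiterB j x hxB
  have hP : ∃ j, 0 < j ∧ φ^[j] x = x := by
    refine ⟨n - m, by omega, ?_⟩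
    rw [hxdef, ← Function.iterate_add_apply]
    have : n - m + m = n := by omega
    rw [this, ← heq]
  set k : ℕ := Nat.find hP with hkdef
  have hk0 : 0 < k := (Nat.find_spec hP).1
  have hkx : φ^[k] x = x := (Nat.find_spec hP).2
  have hk2 : 2 ≤ k := by
    by_contra hcon
    have hk1 : k = 1 := by omega
    rw [hk1] at hkx
    simp only [Function.iterate_one] at hkx
    exact (hφ x hxB).2 hkx
  haveI : NeZero k := ⟨by omega⟩
  haveI : Fact (1 < k) := ⟨by omega⟩
  set b : ZMod k → V := fun i => φ^[i.val] x with hbdef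
  set a : ZMod k → V := fun i => f (b i) with hadef
  have hbB : ∀ i, b i ∈ B := fun i => hxiter i.val
  have haA : ∀ i, a i ∈ A := fun i => hBA _ (hbB i)
  have hbsucc : ∀ i, b (i + 1) = φ (b i) := by
    intro i
    have h1 : (i + 1).val = (i.val + 1) % k := by
      rw [ZMod.val_add, ZMod.val_one]
    show φ^[(i + 1).val] x = φ (φ^[i.val] x)
    by_cases h2 : i.val + 1 < k
    · rw [h1, Nat.mod_eq_of_lt h2, Function.iterate_succ_apply' φ i.val x]
    · have hvi := ZMod.val_lt i
      have h3 : i.val + 1 = k := by omega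
      rw [h1, h3, Nat.mod_self]
      simp only [Function.iterate_zero_apply]
      rw [← Function.iterate_succ_apply' φ i.val x]
      have h4 : Nat.succ i.val = k := h3
      rw [h4, hkx]
  have hbinj : Function.Injective b := by
    intro i j hij
    have hlem : ∀ p q : ℕ, p < q → q < k → φ^[p] x ≠ φ^[q] x := by
      intro p q hpq hqk he
      have h1 : φ^[k - q + p] x = φ^[k - q + q] x := by
        rw [Function.iterate_add_apply φ (k - q) p x,
          Function.iterate_add_apply φ (k - q) q x, he]
      have h2 : k - q + q = k := by omega
      rw [h2, hkx] at h1
      exact Nat.find_min hP (show k - q + p < k by omega) ⟨by omega, h1⟩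
    have hvi := ZMod.val_lt i
    have hvj := ZMod.val_lt j
    have hval : i.val = j.val := by
      by_contra hne
      rcases Nat.lt_or_ge i.val j.val with h | h
      · exact hlem _ _ h hvj hij
      · exact hlem _ _ (by omega) hvi hij.symm
    have h1 := congrArg (fun t : ℕ => (t : ZMod k)) hval
    simpa [ZMod.natCast_val, ZMod.cast_id] using h1
  have hainj : ∀ i j : ZMod k, a i = a j → i = j := by
    intro i j h
    apply hbinj
    have := congrArg f h
    show b i = b j
    calc b i = f (f (b i)) := (hff _).symm
      _ = f (a i) := rfl
      _ = f (a j) := by rw [h]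
      _ = b j := hff _
  have hanb : ∀ i j : ZMod k, a i ≠ b j := by
    intro i j h
    exact hdis (a i) (haA i) (h ▸ hbB j)
  have hGab : ∀ i, G.Adj (a i) (b (i + 1)) := by
    intro i
    rw [hbsucc i]
    exact (hg (a i) (haA i)).1
  set S : Set V := Set.range a ∪ Set.range b with hSdef
  have hfS : ∀ v, v ∉ S → f v ∉ S := by
    intro v hv hfv
    rcases hfv with ⟨i, hi⟩ | ⟨i, hi⟩
    · exact hv (Or.inr ⟨i, by rw [← hff (b i)]; show f (a i) = v; rw [hi, hff]⟩)
    · exact hv (Or.inl ⟨i, show f (b i) = v by rw [hi, hff]⟩)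
  set M' : G.Subgraph :=
    { verts := Set.univ
      Adj := fun x y => (x ∉ S ∧ y ∉ S ∧ M.Adj x y) ∨
        (∃ i, (x = a i ∧ y = b (i + 1)) ∨ (x = b (i + 1) ∧ y = a i))
      adj_sub := by
        rintro x y (⟨-, -, h⟩ | ⟨i, ⟨rfl, rfl⟩ | ⟨rfl, rfl⟩⟩)
        · exact M.adj_sub h
        · exact hGab i
        · exact (hGab i).symm
      edge_vert := fun _ => Set.mem_univ _
      symm := by
        refine ⟨?_⟩
        rintro p q (⟨h1, h2, h3⟩ | ⟨i, ⟨rfl, rfl⟩ | ⟨rfl, rfl⟩⟩)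
        · exact Or.inl ⟨h2, h1, h3.symm⟩
        · exact Or.inr ⟨i, Or.inr ⟨rfl, rfl⟩⟩
        · exact Or.inr ⟨i, Or.inl ⟨rfl, rfl⟩⟩ } with hM'def
  have hM'adj : ∀ p q, M'.Adj p q ↔ ((p ∉ S ∧ q ∉ S ∧ M.Adj p q) ∨
      (∃ i, (p = a i ∧ q = b (i + 1)) ∨ (p = b (i + 1) ∧ q = a i))) := fun p q => Iff.rfl
  have hM'pm : M'.IsPerfectMatching := by
    constructor
    · intro v _
      by_cases hvS : v ∈ S
      · rcases hvS with ⟨i, rfl⟩ | ⟨i, rfl⟩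
        · refine ⟨b (i + 1), (hM'adj _ _).mpr (Or.inr ⟨i, Or.inl ⟨rfl, rfl⟩⟩), ?_⟩
          intro w hw
          rcases (hM'adj _ _).mp hw with ⟨hv, -, -⟩ | ⟨j, ⟨hj, rfl⟩ | ⟨hj, rfl⟩⟩
          · exact (hv (Or.inl ⟨i, rfl⟩)).elim
          · rw [hainj i j hj]
          · exact (hanb i (j + 1) hj).elim
        · refine ⟨a (i - 1), (hM'adj _ _).mpr (Or.inr ⟨i - 1, Or.inr
            ⟨congrArg b (by ring), rfl⟩⟩), ?_⟩
          intro w hw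
          rcases (hM'adj _ _).mp hw with ⟨hv, -, -⟩ | ⟨j, ⟨hj, rfl⟩ | ⟨hj, rfl⟩⟩
          · exact (hv (Or.inr ⟨i, rfl⟩)).elim
          · exact (hanb j i hj.symm).elim
          · have h1 : i = j + 1 := hbinj hj
            have h2 : j = i - 1 := by rw [h1]; ring
            rw [h2]
      · refine ⟨f v, (hM'adj _ _).mpr (Or.inl ⟨hvS, hfS v hvS, hf v⟩), ?_⟩
        intro w hw
        rcases (hM'adj _ _).mp hw with ⟨-, -, h⟩ | ⟨j, ⟨hj, rfl⟩ | ⟨hj, rfl⟩⟩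
        · exact hf' v w h
        · exact (hvS (Or.inl ⟨j, hj.symm⟩)).elim
        · exact (hvS (Or.inr ⟨j + 1, hj.symm⟩)).elim
    · intro v
      exact Set.mem_univ v
  have heqM : M' = M := huniq M' hM'pm
  have hMab : M'.Adj (a 0) (b 0) := by
    rw [heqM]
    exact (hf (b 0)).symm
  rcases (hM'adj _ _).mp hMab with ⟨hv, -, -⟩ | ⟨j, ⟨hj, hw⟩ | ⟨hj, -⟩⟩
  · exact hv (Or.inl ⟨0, rfl⟩)
  · have h0 : (0 : ZMod k) = j := hainj 0 j hj
    rw [← h0] at hw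
    exact (hφ (b 0) (hbB 0)).2 ((hbsucc 0).symm.trans hw.symm)
  · exact hanb 0 (j + 1) hj

theorem stmt3 (G : SimpleGraph V) [Fintype V] [Nonempty V] (A B : Set V)
    (hdisj : Disjoint A B) (hcover : ∀ v, v ∈ A ∨ v ∈ B)
    (hbip : ∀ a b, G.Adj a b → (a ∈ A ∧ b ∈ B) ∨ (a ∈ B ∧ b ∈ A))
    (hupm : ∃! M : G.Subgraph, M.IsPerfectMatching) :
    (∃ a ∈ A, IsLeaf G a) ∧ (∃ b ∈ B, IsLeaf G b) := by
  constructor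
  · by_contra h
    push_neg at h
    exact key_no_leaf G A B hdisj hcover hbip hupm h
  · by_contra h
    push_neg at h
    exact key_no_leaf G B A hdisj.symm (fun v => (hcover v).symm)
      (fun p q hpq => (hbip p q hpq).symm) hupm h
end

section
/- A bipartite graph with a unique perfect matching has at least two leaves. -/
open SimpleGraph

attribute [local instance] Classical.propDecidable

variable {V : Type*}

set_option maxHeartbeats 1600000 in
lemma aux_leaf {V : Type*} (G : SimpleGraph V) [Fintype V]
    (c : G.Coloring (Fin 2)) (M : G.Subgraph) (hM : M.IsPerfectMatching)
    (hU : ∀ N : G.Subgraph, N.IsPerfectMatching → N = M)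
    (i : Fin 2) (v0 : V) (hv0 : c v0 = i) :
    ∃ x, c x = i ∧ IsLeaf G x := by
  by_contra hno
  push_neg at hno
  have hex : ∀ v : V, ∃! w, M.Adj v w := fun v => hM.1 (hM.2 v)
  set μ : V → V := fun v => (hex v).choose with hμdef
  have hμadj : ∀ v, M.Adj v (μ v) := fun v => (hex v).choose_spec.1
  have hμuniq : ∀ v w, M.Adj v w → w = μ v := fun v w h => (hex v).choose_spec.2 w h
  have hμμ : ∀ v, μ (μ v) = v := fun v => (hμuniq (μ v) v (hμadj v).symm).symm
  have hMiff : ∀ v w, M.Adj v w ↔ w = μ v := fun v w =>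
    ⟨hμuniq v w, fun h => h ▸ hμadj v⟩
  have hGμ : ∀ v, G.Adj v (μ v) := fun v => M.adj_sub (hμadj v)
  have hfin2 : ∀ x y z : Fin 2, x ≠ y → z ≠ y → x = z := by decide
  -- choose a non-matching neighbour for every vertex of colour i
  have hbex : ∀ x : V, ∃ u, c x = i → G.Adj x u ∧ u ≠ μ x := by
    intro x
    by_cases hx : c x = i
    · have hnl := hno x hx
      rw [IsLeaf] at hnl
      simp only [ExistsUnique] at hnl
      push_neg at hnl
      obtain ⟨y, hy1, hy2⟩ := hnl (μ x) (hGμ x)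
      exact ⟨y, fun _ => ⟨hy1, hy2⟩⟩
    · exact ⟨x, fun h => absurd h hx⟩
  choose b hb using hbex
  set g : V → V := fun x => μ (b x) with hgdef
  have hbadj : ∀ x, c x = i → G.Adj x (b x) := fun x hx => (hb x hx).1
  have hbne : ∀ x, c x = i → b x ≠ μ x := fun x hx => (hb x hx).2
  have hbc : ∀ x, c x = i → c (b x) ≠ i := by
    intro x hx h
    exact c.valid (hbadj x hx) (hx.trans h.symm)
  have hgc : ∀ x, c x = i → c (g x) = i := by
    intro x hx
    have hadj : G.Adj (b x) (g x) := hGμ (b x)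
    exact hfin2 _ _ _ (c.valid hadj).symm (fun h => hbc x hx h.symm)
  have hgne : ∀ x, c x = i → g x ≠ x := by
    intro x hx h
    apply hbne x hx
    have : μ (g x) = μ x := by rw [h]
    rw [hgdef] at this
    simpa [hμμ] using this
  -- a periodic point of g
  obtain ⟨m, n, hmn, heq⟩ : ∃ m n : ℕ, m < n ∧ g^[m] v0 = g^[n] v0 := by
    obtain ⟨m, n, hne, h⟩ := Finite.exists_ne_map_eq_of_infinite (fun t : ℕ => g^[t] v0)
    rcases lt_or_gt_of_ne hne with h' | h'
    · exact ⟨m, n, h', h⟩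
    · exact ⟨n, m, h', h.symm⟩
  set a : V := g^[m] v0 with hadef
  obtain ⟨k', hka⟩ : ∃ k', g^[k' + 1] a = a := by
    refine ⟨n - m - 1, ?_⟩
    rw [show n - m - 1 + 1 = n - m by omega, hadef, ← Function.iterate_add_apply,
      show n - m + m = n by omega]
    exact heq.symm
  set C : Set V := Set.range (fun t : ℕ => g^[t] a) with hCdef
  have haC : a ∈ C := ⟨0, rfl⟩
  have hgC : ∀ x ∈ C, g x ∈ C := by
    rintro x ⟨t, rfl⟩
    refine ⟨t + 1, ?_⟩
    show g^[t + 1] a = g ((fun t : ℕ => g^[t] a) t)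
    exact Function.iterate_succ_apply' g t a
  have hcv0 : ∀ t : ℕ, c (g^[t] v0) = i := by
    intro t
    induction t with
    | zero => simpa using hv0
    | succ t ih => rw [Function.iterate_succ_apply']; exact hgc _ ih
  have hCc : ∀ x ∈ C, c x = i := by
    rintro x ⟨t, rfl⟩
    simp only [hadef, ← Function.iterate_add_apply]
    exact hcv0 _
  have hkC : ∀ x ∈ C, g^[k' + 1] x = x := by
    rintro x ⟨t, rfl⟩
    show g^[k' + 1] (g^[t] a) = g^[t] a
    rw [← Function.iterate_add_apply, Nat.add_comm, Function.iterate_add_apply, hka]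
  set p : V → V := fun x => g^[k'] x with hpdef
  have hpC : ∀ x ∈ C, p x ∈ C := by
    rintro x ⟨t, rfl⟩
    refine ⟨k' + t, ?_⟩
    show g^[k' + t] a = g^[k'] ((fun t : ℕ => g^[t] a) t)
    exact Function.iterate_add_apply g k' t a
  have hgpx : ∀ x ∈ C, g (p x) = x := by
    intro x hx
    show g (g^[k'] x) = x
    rw [← Function.iterate_succ_apply' g k' x]
    exact hkC x hx
  have hpgx : ∀ x ∈ C, p (g x) = x := by
    intro x hx
    show g^[k'] (g x) = x
    rw [← Function.iterate_succ_apply g k' x]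
    exact hkC x hx
  have hginj : ∀ x ∈ C, ∀ y ∈ C, g x = g y → x = y := by
    intro x hx y hy h
    rw [← hpgx x hx, h, hpgx y hy]
  have hbinj : ∀ x ∈ C, ∀ y ∈ C, b x = b y → x = y := by
    intro x hx y hy h
    apply hginj x hx y hy
    show μ (b x) = μ (b y); rw [h]
  have hbp : ∀ x ∈ C, b (p x) = μ x := by
    intro x hx
    have h1 : μ (b (p x)) = x := hgpx x hx
    rw [← hμμ (b (p x)), h1]
  -- the alternating cycle graph
  set G' : SimpleGraph V :=
    { Adj := fun x y => ∃ z ∈ C, (x = z ∧ y = b z) ∨ (x = b z ∧ y = z) ∨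
        (x = b z ∧ y = g z) ∨ (x = g z ∧ y = b z)
      symm := by
        constructor
        rintro x y ⟨z, hz, h⟩
        exact ⟨z, hz, by tauto⟩
      loopless := by
        constructor
        rintro x ⟨z, hz, h⟩
        have hzc := hCc z hz
        rcases h with ⟨h1, h2⟩ | ⟨h1, h2⟩ | ⟨h1, h2⟩ | ⟨h1, h2⟩
        · exact hbc z hzc (by rw [← h2, h1]; exact hzc)
        · exact hbc z hzc (by rw [← h1, h2]; exact hzc)
        · exact hbc z hzc (by rw [← h1, h2]; exact hgc z hzc)
        · exact hbc z hzc (by rw [← h2, h1]; exact hgc z hzc) } with hG'def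
  have hN1 : ∀ x ∈ C, ∀ y, G'.Adj x y ↔ (y = b x ∨ y = b (p x)) := by
    intro x hx y
    have hxc := hCc x hx
    constructor
    · rintro ⟨z, hz, h⟩
      have hzc := hCc z hz
      have hbzc := hbc z hzc
      have hgzc := hgc z hzc
      rcases h with ⟨h1, h2⟩ | ⟨h1, h2⟩ | ⟨h1, h2⟩ | ⟨h1, h2⟩
      · left; rw [h2, h1]
      · exact absurd hxc (h1 ▸ hbzc)
      · exact absurd hxc (h1 ▸ hbzc)
      · right
        have : z = p x := hginj z hz (p x) (hpC x hx) (by rw [← h1, hgpx x hx])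
        rw [h2, this]
    · rintro (h | h)
      · exact ⟨x, hx, Or.inl ⟨rfl, h⟩⟩
      · exact ⟨p x, hpC x hx, Or.inr (Or.inr (Or.inr ⟨(hgpx x hx).symm, h⟩))⟩
  have hN2 : ∀ x ∈ C, ∀ y, G'.Adj (b x) y ↔ (y = x ∨ y = g x) := by
    intro x hx y
    have hxc := hCc x hx
    have hbxc := hbc x hxc
    constructor
    · rintro ⟨z, hz, h⟩
      have hzc := hCc z hz
      have hgzc := hgc z hzc
      rcases h with ⟨h1, h2⟩ | ⟨h1, h2⟩ | ⟨h1, h2⟩ | ⟨h1, h2⟩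
      · exact absurd (h1 ▸ hzc) hbxc
      · left; rw [h2, hbinj z hz x hx h1.symm]
      · right; rw [h2, hbinj z hz x hx h1.symm]
      · exact absurd (h1 ▸ hgzc) hbxc
    · rintro (h | h)
      · exact ⟨x, hx, Or.inr (Or.inl ⟨rfl, h⟩)⟩
      · exact ⟨x, hx, Or.inr (Or.inr (Or.inl ⟨rfl, h⟩))⟩
  have hbCne : ∀ x ∈ C, b x ∉ C := by
    intro x hx h
    exact hbc x (hCc x hx) (hCc _ h)
  have hN3 : ∀ x, x ∉ C → (∀ y ∈ C, x ≠ b y) → ∀ y, ¬ G'.Adj x y := by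
    rintro x hx hxb y ⟨z, hz, h⟩
    rcases h with ⟨h1, _⟩ | ⟨h1, _⟩ | ⟨h1, _⟩ | ⟨h1, _⟩
    · exact hx (h1 ▸ hz)
    · exact hxb z hz h1
    · exact hxb z hz h1
    · exact hx (h1 ▸ hgC z hz)
  have hbbp : ∀ x ∈ C, b x ≠ b (p x) := by
    intro x hx h
    have : g x = g (p x) := by show μ (b x) = μ (b (p x)); rw [h]
    rw [hgpx x hx] at this
    exact hgne x (hCc x hx) this
  -- G' ≤ G
  have hG'le : G' ≤ G := by
    rintro x y ⟨z, hz, h⟩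
    have hzc := hCc z hz
    rcases h with ⟨h1, h2⟩ | ⟨h1, h2⟩ | ⟨h1, h2⟩ | ⟨h1, h2⟩
    · rw [h1, h2]; exact hbadj z hzc
    · rw [h1, h2]; exact (hbadj z hzc).symm
    · rw [h1, h2]; exact hGμ (b z)
    · rw [h1, h2]; exact (hGμ (b z)).symm
  -- G' is cycles
  have hG'cyc : G'.IsCycles := by
    intro v hne
    by_cases hv : v ∈ C
    · have : G'.neighborSet v = {b v, b (p v)} := by
        ext y
        simp only [mem_neighborSet, Set.mem_insert_iff, Set.mem_singleton_iff]
        exact hN1 v hv y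
      rw [this]
      exact Set.ncard_pair (hbbp v hv)
    · by_cases hvb : ∃ x ∈ C, v = b x
      · obtain ⟨x, hx, rfl⟩ := hvb
        have : G'.neighborSet (b x) = ({x, g x} : Set V) := by
          ext y
          simp only [mem_neighborSet, Set.mem_insert_iff, Set.mem_singleton_iff]
          exact hN2 x hx y
        rw [this]
        exact Set.ncard_pair (fun h => hgne x (hCc x hx) h.symm)
      · exfalso
        obtain ⟨y, hy⟩ := hne
        push_neg at hvb
        exact hN3 v hv (fun z hz h => hvb z hz h) y hy
  -- G' is alternating w.r.t. M
  have hG'alt : G'.IsAlternating M.spanningCoe := by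
    intro v w w' hww' hvw hvw'
    simp only [Subgraph.spanningCoe_adj]
    by_cases hv : v ∈ C
    · have h1 := (hN1 v hv w).mp hvw
      have h2 := (hN1 v hv w').mp hvw'
      have hmv1 : ¬ M.Adj v (b v) := fun h => hbne v (hCc v hv) (hμuniq v _ h)
      have hmv2 : M.Adj v (b (p v)) := by
        rw [hMiff]; exact (hbp v hv)
      rcases h1 with rfl | rfl <;> rcases h2 with rfl | rfl
      · exact absurd rfl hww'
      · exact iff_of_false hmv1 (not_not_intro hmv2)
      · exact iff_of_true hmv2 hmv1
      · exact absurd rfl hww'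
    · by_cases hvb : ∃ x ∈ C, v = b x
      · obtain ⟨x, hx, rfl⟩ := hvb
        have h1 := (hN2 x hx w).mp hvw
        have h2 := (hN2 x hx w').mp hvw'
        have hmv1 : ¬ M.Adj (b x) x := by
          intro h
          have hx' := hμuniq _ _ h
          exact hgne x (hCc x hx) hx'.symm
        have hmv2 : M.Adj (b x) (g x) := hμadj (b x)
        rcases h1 with rfl | rfl <;> rcases h2 with rfl | rfl
        · exact absurd rfl hww'
        · exact iff_of_false hmv1 (not_not_intro hmv2)
        · exact iff_of_true hmv2 hmv1
        · exact absurd rfl hww'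
      · push_neg at hvb
        exact absurd hvw (hN3 v hv (fun z hz h => hvb z hz h) w)
  -- build the second perfect matching
  have hH := Subgraph.IsPerfectMatching.symmDiff_of_isAlternating hM hG'alt hG'cyc
  rw [Subgraph.isPerfectMatching_iff] at hH
  have hHle : (symmDiff M.spanningCoe G') ≤ G :=
    le_trans symmDiff_le_sup (sup_le M.spanningCoe_le hG'le)
  set N : G.Subgraph := SimpleGraph.toSubgraph (symmDiff M.spanningCoe G') hHle with hNdef
  have hN : N.IsPerfectMatching := by
    rw [Subgraph.isPerfectMatching_iff]
    intro v
    obtain ⟨w, hw1, hw2⟩ := hH v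
    simp only [toSubgraph_adj] at hw1 hw2 ⊢
    exact ⟨w, hw1, hw2⟩
  have hNM := hU N hN
  -- contradiction: N has the non-matching edge (a, b a)
  have hHab : (symmDiff M.spanningCoe G').Adj a (b a) := by
    have hG'ab : G'.Adj a (b a) := ⟨a, haC, Or.inl ⟨rfl, rfl⟩⟩
    have hMab : ¬ M.Adj a (b a) := fun h => hbne a (hCc a haC) (hμuniq a _ h)
    simp only [symmDiff_def, sup_adj, sdiff_adj, Subgraph.spanningCoe_adj]
    exact Or.inr ⟨hG'ab, hMab⟩
  have : N.Adj a (b a) := by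
    rw [hNdef]
    exact hHab
  rw [hNM] at this
  exact hbne a (hCc a haC) (hμuniq a _ this)

theorem stmt4 (G : SimpleGraph V) [Fintype V] [Nonempty V] (hbip : G.Colorable 2)
    (hupm : ∃! M : G.Subgraph, M.IsPerfectMatching) :
    ∃ a b, a ≠ b ∧ IsLeaf G a ∧ IsLeaf G b := by
  obtain ⟨M, hM, hU⟩ := hupm
  have hU' : ∀ N : G.Subgraph, N.IsPerfectMatching → N = M := hU
  let c : G.Coloring (Fin 2) := hbip.some
  obtain ⟨v0⟩ : Nonempty V := inferInstance
  obtain ⟨w0, hw0, -⟩ := hM.1 (hM.2 v0)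
  have hne : c v0 ≠ c w0 := c.valid (M.adj_sub hw0)
  have hboth : ∀ i : Fin 2, ∃ x : V, c x = i := by
    intro i
    have hd : ∀ i x y : Fin 2, x ≠ y → (x = i ∨ y = i) := by decide
    rcases hd i _ _ hne with h | h
    · exact ⟨v0, h⟩
    · exact ⟨w0, h⟩
  obtain ⟨x0, hx0⟩ := hboth 0
  obtain ⟨x1, hx1⟩ := hboth 1
  obtain ⟨a, ha, hal⟩ := aux_leaf G c M hM hU' 0 x0 hx0
  obtain ⟨b, hb, hbl⟩ := aux_leaf G c M hM hU' 1 x1 hx1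
  refine ⟨a, b, ?_, hal, hbl⟩
  intro h
  rw [h, hb] at ha
  exact absurd ha (by decide)
end

section
/- Let G be a König-Egerváry graph with a unique perfect matching M, and let a be a leaf of G with its unique neighbor b. Then ab ∈ M, and G - {a, b} is a König-Egerváry graph whose unique perfect matching is M \ {ab}. -/
open SimpleGraph

attribute [local instance] Classical.propDecidable

variable {V : Type*}

lemma matching_ncard_verts {G : SimpleGraph V} [Fintype V] {M : G.Subgraph}
    (h : M.IsMatching) : M.verts.ncard = 2 * M.edgeSet.ncard := by
  classical
  have hfinE : M.edgeSet.Finite := Set.toFinite _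
  have hfinV : M.verts.Finite := Set.toFinite _
  set F : Finset (Sym2 V) := hfinE.toFinset with hF
  have key : hfinV.toFinset = F.biUnion (fun e => Set.toFinset {x | x ∈ e}) := by
    ext x
    simp only [Set.Finite.mem_toFinset, Finset.mem_biUnion, Set.mem_toFinset, Set.mem_setOf_eq, hF]
    constructor
    · intro hx
      obtain ⟨w, hw, -⟩ := h hx
      exact ⟨s(x, w), by simpa [Subgraph.mem_edgeSet] using hw, Sym2.mem_mk_left _ _⟩
    · rintro ⟨e, he, hxe⟩
      obtain ⟨y, rfl⟩ := Sym2.mem_iff_exists.mp hxe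
      exact M.edge_vert (Subgraph.mem_edgeSet.mp he)
  have hdisj : ∀ e ∈ F, ∀ f ∈ F, e ≠ f →
      Disjoint (Set.toFinset {x | x ∈ e}) (Set.toFinset {x | x ∈ f}) := by
    intro e he f hf hef
    rw [Finset.disjoint_left]
    intro x hxe hxf
    simp only [Set.mem_toFinset, Set.mem_setOf_eq] at hxe hxf
    simp only [hF, Set.Finite.mem_toFinset] at he hf
    obtain ⟨y, rfl⟩ := Sym2.mem_iff_exists.mp hxe
    obtain ⟨z, rfl⟩ := Sym2.mem_iff_exists.mp hxf
    have hy : M.Adj x y := Subgraph.mem_edgeSet.mp he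
    have hz : M.Adj x z := Subgraph.mem_edgeSet.mp hf
    obtain ⟨w, -, huw⟩ := h (M.edge_vert hy)
    have : y = z := (huw y hy).trans (huw z hz).symm
    exact hef (by rw [this])
  have hcard : ∀ e ∈ F, (Set.toFinset {x | x ∈ e}).card = 2 := by
    intro e he
    simp only [hF, Set.Finite.mem_toFinset] at he
    induction e using Sym2.ind with
    | _ u v =>
      have huv : u ≠ v := (M.adj_sub (Subgraph.mem_edgeSet.mp he)).ne
      have : {x | x ∈ s(u, v)} = ({u, v} : Set V) := by
        ext x; simp [Sym2.mem_iff]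
      rw [Set.toFinset_congr this]
      rw [Set.toFinset_insert, Set.toFinset_singleton]
      rw [Finset.card_insert_of_notMem (by simpa using huv)]
      simp
  rw [Set.ncard_eq_toFinset_card _ hfinV, key, Finset.card_biUnion hdisj,
    Finset.sum_congr rfl hcard, Finset.sum_const, smul_eq_mul,
    Set.ncard_eq_toFinset_card _ hfinE]
  ring

lemma indepSet_bdd (G : SimpleGraph V) [Fintype V] :
    BddAbove {n | ∃ s : Finset V, _root_.IsIndepSet G ↑s ∧ s.card = n} := by
  refine ⟨Fintype.card V, ?_⟩
  rintro n ⟨s, -, rfl⟩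
  exact Finset.card_le_univ s

lemma indepSet_nonempty (G : SimpleGraph V) [Fintype V] :
    Set.Nonempty {n | ∃ s : Finset V, _root_.IsIndepSet G ↑s ∧ s.card = n} :=
  ⟨0, ∅, by intro x hx; simp at hx, by simp⟩

lemma card_le_indepNum {G : SimpleGraph V} [Fintype V] {s : Finset V}
    (h : _root_.IsIndepSet G ↑s) : s.card ≤ _root_.indepNum G :=
  le_csSup (indepSet_bdd G) ⟨s, h, rfl⟩

lemma exists_max_indep (G : SimpleGraph V) [Fintype V] :
    ∃ s : Finset V, _root_.IsIndepSet G ↑s ∧ s.card = _root_.indepNum G := by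
  have := Nat.sSup_mem (indepSet_nonempty G) (indepSet_bdd G)
  obtain ⟨s, hs, hc⟩ := this
  exact ⟨s, hs, hc⟩

lemma matchNum_perfect {G : SimpleGraph V} [Fintype V] {M : G.Subgraph}
    (hM : M.IsPerfectMatching) : matchNum G = M.edgeSet.ncard := by
  apply IsGreatest.csSup_eq
  constructor
  · exact ⟨M, hM.1, rfl⟩
  · rintro n ⟨N, hN, rfl⟩
    have h1 := matching_ncard_verts hN
    have h2 := matching_ncard_verts hM.1
    have hsub : N.verts ⊆ M.verts := by
      rw [Subgraph.isSpanning_iff.mp hM.2]; exact Set.subset_univ _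
    have := Set.ncard_le_ncard hsub (Set.toFinite _)
    omega

lemma two_mul_matchNum {G : SimpleGraph V} [Fintype V] {M : G.Subgraph}
    (hM : M.IsPerfectMatching) : 2 * matchNum G = Fintype.card V := by
  rw [matchNum_perfect hM, ← matching_ncard_verts hM.1, Subgraph.isSpanning_iff.mp hM.2,
    Set.ncard_univ, Nat.card_eq_fintype_card]

theorem stmt7 (G : SimpleGraph V) [Fintype V] (hKE : KonigEgervary G)
    (M : G.Subgraph) (hM : M.IsPerfectMatching)
    (huniq : ∀ M' : G.Subgraph, M'.IsPerfectMatching → M' = M)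
    (a b : V) (hleaf : ∀ u, G.Adj a u ↔ u = b) :
    M.Adj a b ∧
    KonigEgervary (G.induce ({a, b}ᶜ : Set V)) ∧
    ∃ M' : (G.induce ({a, b}ᶜ : Set V)).Subgraph, M'.IsPerfectMatching ∧
      (∀ x y : ({a, b}ᶜ : Set V), M'.Adj x y ↔ M.Adj ↑x ↑y) ∧
      ∀ M'' : (G.induce ({a, b}ᶜ : Set V)).Subgraph, M''.IsPerfectMatching → M'' = M' := by
  classical
  have hab : G.Adj a b := (hleaf b).2 rfl
  have hne : a ≠ b := hab.ne
  have haM : M.Adj a b := by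
    obtain ⟨w, hw, -⟩ := hM.1 (hM.2 a)
    have hwb := (hleaf w).1 (M.adj_sub hw)
    subst hwb; exact hw
  have hMa : ∀ v, M.Adj a v → v = b := fun v hv => (hleaf v).1 (M.adj_sub hv)
  have hMb : ∀ v, M.Adj b v → v = a := by
    intro v hv
    obtain ⟨w, hw, hu⟩ := hM.1 (hM.2 b)
    exact (hu v hv).trans (hu a haM.symm).symm
  have hmem : ∀ x : V, x ∈ ({a, b}ᶜ : Set V) ↔ x ≠ a ∧ x ≠ b := by
    intro x; simp [not_or]
  have hpart : ∀ x w : V, x ≠ a → x ≠ b → M.Adj x w → w ≠ a ∧ w ≠ b := by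
    intro x w hxa hxb hw
    constructor
    · rintro rfl; exact hxb (hMa x hw.symm)
    · rintro rfl; exact hxa (hMb x hw.symm)
  -- the restricted matching
  let M' : (G.induce ({a, b}ᶜ : Set V)).Subgraph :=
    { verts := Set.univ
      Adj := fun x y => M.Adj ↑x ↑y
      adj_sub := fun h => M.adj_sub h
      edge_vert := fun _ => Set.mem_univ _
      symm := ⟨fun x y h => M.adj_symm h⟩ }
  have hM'adj : ∀ x y : ({a, b}ᶜ : Set V), M'.Adj x y ↔ M.Adj ↑x ↑y := fun x y => Iff.rfl
  have hM'pm : M'.IsPerfectMatching := by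
    constructor
    · rintro ⟨v, hv⟩ -
      obtain ⟨hva, hvb⟩ := (hmem v).1 hv
      obtain ⟨w, hw, hu⟩ := hM.1 (hM.2 v)
      obtain ⟨hwa, hwb⟩ := hpart v w hva hvb hw
      refine ⟨⟨w, (hmem w).2 ⟨hwa, hwb⟩⟩, hw, ?_⟩
      rintro ⟨z, hz⟩ hz'
      exact Subtype.ext (hu z hz')
    · intro v; exact Set.mem_univ _
  -- uniqueness of M'
  have huniq' : ∀ M'' : (G.induce ({a, b}ᶜ : Set V)).Subgraph,
      M''.IsPerfectMatching → M'' = M' := by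
    intro M'' hM''
    set f : G.induce ({a, b}ᶜ : Set V) ↪g G := SimpleGraph.Embedding.induce _ with hf
    have hinj : Function.Injective f := f.injective
    set N : G.Subgraph := (M''.map f.toHom) ⊔ G.subgraphOfAdj hab with hNdef
    have hmapM : (M''.map f.toHom).IsMatching := hM''.1.map f.toHom hinj
    have hsupmap : (M''.map f.toHom).support = ({a, b}ᶜ : Set V) := by
      rw [hmapM.support_eq_verts]
      simp only [Subgraph.map_verts]
      rw [Subgraph.isSpanning_iff.mp hM''.2, Set.image_univ]
      exact Subtype.range_coe
    have hNm : N.IsMatching := by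
      apply hmapM.sup (Subgraph.IsMatching.subgraphOfAdj hab)
      rw [hsupmap, support_subgraphOfAdj]
      exact disjoint_compl_left
    have hNs : N.IsSpanning := by
      rw [Subgraph.isSpanning_iff, hNdef, Subgraph.verts_sup]
      rw [← hsupmap, hmapM.support_eq_verts] at *
      rw [hsupmap]
      simp only [subgraphOfAdj_verts]
      exact Set.compl_union_self _
    have hNM : N = M := huniq N ⟨hNm, hNs⟩
    have hNadj : ∀ x y : ({a, b}ᶜ : Set V), M''.Adj x y ↔ N.Adj ↑x ↑y := by
      intro x y
      constructor
      · intro h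
        exact Or.inl ⟨x, y, h, rfl, rfl⟩
      · rintro (⟨x', y', h, hx, hy⟩ | h)
        · have hx' : x' = x := Subtype.ext hx
          have hy' : y' = y := Subtype.ext hy
          rwa [hx', hy'] at h
        · exfalso
          rw [subgraphOfAdj_adj] at h
          have hxm := (hmem ↑x).1 x.2
          have hym := (hmem ↑y).1 y.2
          rw [Sym2.eq_iff] at h
          rcases h with ⟨h1, h2⟩ | ⟨h1, h2⟩
          · exact hxm.1 h1.symm
          · exact hym.1 h1.symm
    have hverts : M''.verts = M'.verts := by
      exact Subgraph.isSpanning_iff.mp hM''.2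
    have hadj : M''.Adj = M'.Adj := by
      ext x y
      rw [hNadj x y, hNM]
    exact SimpleGraph.Subgraph.ext hverts hadj
  -- cardinalities
  set n := Fintype.card V with hn
  have hcard' : Fintype.card ({a, b}ᶜ : Set V) = n - 2 := by
    rw [← Nat.card_eq_fintype_card, Nat.card_coe_set_eq]
    have h2 : ({a, b} : Set V).ncard = 2 := Set.ncard_pair hne
    have := Set.ncard_add_ncard_compl ({a, b} : Set V)
    rw [h2, Nat.card_eq_fintype_card] at this
    omega
  have hn2 : 2 ≤ n := Fintype.one_lt_card_iff_nontrivial.mpr ⟨a, b, hne⟩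
  have hmu : 2 * matchNum G = n := two_mul_matchNum hM
  have hmu' : 2 * matchNum (G.induce ({a, b}ᶜ : Set V)) = n - 2 := by
    rw [two_mul_matchNum hM'pm, hcard']
  -- _root_.indepNum bounds
  have hub : _root_.indepNum (G.induce ({a, b}ᶜ : Set V)) + 1 ≤ _root_.indepNum G := by
    obtain ⟨T, hTi, hTc⟩ := exists_max_indep (G.induce ({a, b}ᶜ : Set V))
    have haT : a ∉ T.image (Subtype.val) := by
      simp only [Finset.mem_image]
      rintro ⟨x, -, hx⟩
      exact ((hmem ↑x).1 x.2).1 hx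
    have hcardT : (insert a (T.image Subtype.val)).card = T.card + 1 := by
      rw [Finset.card_insert_of_notMem haT, Finset.card_image_of_injective _ Subtype.val_injective]
    have hindep : _root_.IsIndepSet G ↑(insert a (T.image Subtype.val)) := by
      intro x hx y hy hxy
      simp only [Finset.coe_insert, Set.mem_insert_iff, Finset.coe_image, Set.mem_image,
        Finset.mem_coe] at hx hy
      rcases hx with rfl | ⟨x', hx', rfl⟩
      · rcases hy with rfl | ⟨y', hy', rfl⟩
        · exact G.loopless.irrefl _ hxy
        · exact ((hmem ↑y').1 y'.2).2 ((hleaf ↑y').1 hxy)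
      · rcases hy with rfl | ⟨y', hy', rfl⟩
        · exact ((hmem ↑x').1 x'.2).2 ((hleaf ↑x').1 hxy.symm)
        · exact hTi hx' hy' hxy
    calc _root_.indepNum (G.induce ({a, b}ᶜ : Set V)) + 1 = T.card + 1 := by rw [hTc]
      _ = (insert a (T.image Subtype.val)).card := hcardT.symm
      _ ≤ _root_.indepNum G := card_le_indepNum hindep
  have hone : 1 ≤ _root_.indepNum G := by
    have : _root_.IsIndepSet G ↑({a} : Finset V) := by
      intro x hx y hy hxy
      simp only [Finset.coe_singleton, Set.mem_singleton_iff] at hx hy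
      subst hx; subst hy; exact G.loopless.irrefl _ hxy
    simpa using card_le_indepNum this
  have hlb : _root_.indepNum G ≤ _root_.indepNum (G.induce ({a, b}ᶜ : Set V)) + 1 := by
    obtain ⟨S, hSi, hSc⟩ := exists_max_indep G
    -- get a max indep set containing a, not containing b
    obtain ⟨S₂, hS₂i, hS₂c, haS₂, hbS₂⟩ :
        ∃ S₂ : Finset V, _root_.IsIndepSet G ↑S₂ ∧ S₂.card = _root_.indepNum G ∧ a ∈ S₂ ∧ b ∉ S₂ := by
      by_cases hb : b ∈ S
      · have haS : a ∉ S := fun haS => hSi haS hb hab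
        refine ⟨insert a (S.erase b), ?_, ?_, Finset.mem_insert_self _ _, ?_⟩
        · intro x hx y hy hxy
          simp only [Finset.coe_insert, Set.mem_insert_iff, Finset.coe_erase,
            Set.mem_diff, Finset.mem_coe, Set.mem_singleton_iff] at hx hy
          rcases hx with rfl | ⟨hx1, hx2⟩
          · rcases hy with rfl | ⟨hy1, hy2⟩
            · exact G.loopless.irrefl _ hxy
            · exact hy2 ((hleaf y).1 hxy)
          · rcases hy with rfl | ⟨hy1, hy2⟩
            · exact hx2 ((hleaf x).1 hxy.symm)
            · exact hSi hx1 hy1 hxy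
        · rw [Finset.card_insert_of_notMem (fun h => haS (Finset.mem_of_mem_erase h)),
            Finset.card_erase_of_mem hb, hSc]
          omega
        · simp [Finset.mem_insert, hne.symm]
      · by_cases ha : a ∈ S
        · exact ⟨S, hSi, hSc, ha, hb⟩
        · exfalso
          have hindep : _root_.IsIndepSet G ↑(insert a S) := by
            intro x hx y hy hxy
            simp only [Finset.coe_insert, Set.mem_insert_iff, Finset.mem_coe] at hx hy
            rcases hx with rfl | hx
            · rcases hy with rfl | hy
              · exact G.loopless.irrefl _ hxy
              · exact hb (((hleaf y).1 hxy) ▸ hy)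
            · rcases hy with rfl | hy
              · exact hb (((hleaf x).1 hxy.symm) ▸ hx)
              · exact hSi hx hy hxy
          have := card_le_indepNum hindep
          rw [Finset.card_insert_of_notMem ha, hSc] at this
          omega
    -- move to the subtype
    set T : Finset ({a, b}ᶜ : Set V) := (S₂.erase a).subtype (· ∈ ({a, b}ᶜ : Set V)) with hT
    have hTc : T.card = _root_.indepNum G - 1 := by
      rw [hT, Finset.card_subtype]
      have : (S₂.erase a).filter (· ∈ ({a, b}ᶜ : Set V)) = S₂.erase a := by
        apply Finset.filter_true_of_mem
        intro x hx
        exact (hmem x).2 ⟨Finset.ne_of_mem_erase hx,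
          fun h => hbS₂ (h ▸ Finset.mem_of_mem_erase hx)⟩
      rw [this, Finset.card_erase_of_mem haS₂, hS₂c]
    have hTi : _root_.IsIndepSet (G.induce ({a, b}ᶜ : Set V)) ↑T := by
      intro x hx y hy hxy
      have hx' : ↑x ∈ S₂.erase a := Finset.mem_subtype.mp (Finset.mem_coe.mp hx)
      have hy' : ↑y ∈ S₂.erase a := Finset.mem_subtype.mp (Finset.mem_coe.mp hy)
      exact hS₂i (Finset.mem_of_mem_erase hx') (Finset.mem_of_mem_erase hy') hxy
    have := card_le_indepNum hTi
    omega
  have hieq : _root_.indepNum (G.induce ({a, b}ᶜ : Set V)) = _root_.indepNum G - 1 := by omega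
  refine ⟨haM, ?_, M', hM'pm, hM'adj, huniq'⟩
  unfold KonigEgervary at hKE ⊢
  rw [hcard']
  omega
end

section
/- If a unicyclic graph G with an odd cycle has a perfect matching M, then M is the unique perfect matching of G. -/
open SimpleGraph

attribute [local instance] Classical.propDecidable

variable {V : Type*}

open scoped symmDiff in
lemma alt_aux {G : SimpleGraph V} {M M' : G.Subgraph}
    (hM : M.IsPerfectMatching) (hM' : M'.IsPerfectMatching) :
    (M.spanningCoe ∆ M'.spanningCoe).IsAlternating M.spanningCoe := by
  intro v w w' hww' h1 h2
  obtain ⟨m, hm, hmu⟩ := hM.1 (hM.2 v)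
  obtain ⟨m', hm', hmu'⟩ := hM'.1 (hM'.2 v)
  simp only [symmDiff_def, SimpleGraph.sup_adj, SimpleGraph.sdiff_adj,
    SimpleGraph.Subgraph.spanningCoe_adj] at h1 h2 ⊢
  rcases h1 with ⟨h1M, h1n⟩ | ⟨h1M', h1n⟩ <;> rcases h2 with ⟨h2M, h2n⟩ | ⟨h2M', h2n⟩
  · exact absurd ((hmu _ h1M).trans (hmu _ h2M).symm) hww'
  · simp [h1M, h2n]
  · simp [h1n, h2M]
  · exact absurd ((hmu' _ h1M').trans (hmu' _ h2M').symm) hww'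

open scoped symmDiff in
theorem stmt10 (G : SimpleGraph V) [Fintype V] (huni : UniqueCycle G)
    (hodd : ∃ (v : V) (p : G.Walk v v), p.IsCycle ∧ Odd p.length)
    (M : G.Subgraph) (hM : M.IsPerfectMatching) :
    ∀ M' : G.Subgraph, M'.IsPerfectMatching → M' = M := by
  intro M' hM'
  by_contra hne
  set D : SimpleGraph V := M.spanningCoe ∆ M'.spanningCoe with hD
  have hDcyc : D.IsCycles :=
    SimpleGraph.Subgraph.IsPerfectMatching.symmDiff_isCycles hM hM'
  have hAlt : D.IsAlternating M.spanningCoe := alt_aux hM hM'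
  have hDG : D ≤ G :=
    le_trans symmDiff_le_sup (sup_le M.spanningCoe_le M'.spanningCoe_le)
  have hDne : D ≠ ⊥ := by
    intro h
    rw [hD, symmDiff_eq_bot] at h
    refine hne (SimpleGraph.Subgraph.ext ?_ ?_)
    · rw [Set.eq_univ_iff_forall.mpr hM'.2, Set.eq_univ_iff_forall.mpr hM.2]
    · exact SimpleGraph.Subgraph.spanningCoe_inj.mp h.symm
  obtain ⟨v, w, hvw⟩ : ∃ v w, D.Adj v w := by
    by_contra h
    push_neg at h
    exact hDne (by ext a b; simp [h a b])
  have key : ∀ a b, D.Adj a b → ∃ c, c ≠ a ∧ D.Adj b c ∧ D.neighborSet b = {a, c} := by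
    intro a b hab
    have hcard := hDcyc ⟨a, hab.symm⟩
    obtain ⟨p, q, hpq, hset⟩ := Set.ncard_eq_two.mp hcard
    have hamem : a ∈ D.neighborSet b := hab.symm
    rw [hset] at hamem
    simp only [Set.mem_insert_iff, Set.mem_singleton_iff] at hamem
    rcases hamem with rfl | rfl
    · exact ⟨q, hpq.symm, by rw [← SimpleGraph.mem_neighborSet, hset]; simp, hset⟩
    · exact ⟨p, hpq, by rw [← SimpleGraph.mem_neighborSet, hset]; simp,
        by rw [hset, Set.pair_comm]⟩
  classical
  set F : V × V → V × V :=
    fun s => if h : D.Adj s.1 s.2 then (s.2, (key _ _ h).choose) else s with hF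
  have hFeq : ∀ s (h : D.Adj s.1 s.2), F s = (s.2, (key _ _ h).choose) := fun s h => dif_pos h
  set x : ℕ → V := fun n => (F^[n] (v, w)).1 with hx
  have hFadj : ∀ n, D.Adj (F^[n] (v, w)).1 (F^[n] (v, w)).2 := by
    intro n
    induction n with
    | zero => exact hvw
    | succ n ih =>
      rw [Function.iterate_succ_apply']
      rw [hFeq _ ih]
      exact ((key _ _ ih).choose_spec).2.1
  have hsnd : ∀ n, x (n + 1) = (F^[n] (v, w)).2 := by
    intro n
    show (F^[n + 1] (v, w)).1 = _
    rw [Function.iterate_succ_apply']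
    rw [hFeq _ (hFadj n)]
  have hadj : ∀ n, D.Adj (x n) (x (n + 1)) := fun n => by rw [hsnd]; exact hFadj n
  have hstep2 : ∀ n, x (n + 2) ≠ x n := by
    intro n
    rw [hsnd (n + 1), Function.iterate_succ_apply']
    rw [hFeq _ (hFadj n)]
    exact ((key _ _ (hFadj n)).choose_spec).1
  have hNbr : ∀ n, D.neighborSet (x (n + 1)) = {x n, x (n + 2)} := by
    intro n
    rw [hsnd n, hsnd (n + 1), Function.iterate_succ_apply']
    rw [hFeq _ (hFadj n)]
    exact ((key _ _ (hFadj n)).choose_spec).2.2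
  have hx0 : x 0 = v := rfl
  have hx1 : x 1 = w := by rw [hsnd 0]; rfl
  have hrep : ∃ n, 0 < n ∧ ∃ i, i < n ∧ x i = x n := by
    obtain ⟨i, j, hij, hfe⟩ :=
      Finite.exists_ne_map_eq_of_infinite (fun n : ℕ => F^[n] (v, w))
    have hxe : x i = x j := congrArg Prod.fst hfe
    rcases hij.lt_or_gt with h | h
    · exact ⟨j, by omega, i, h, hxe⟩
    · exact ⟨i, by omega, j, h, hxe.symm⟩
  set j0 := Nat.find hrep with hj0def
  obtain ⟨hj0pos, i0, hi0lt, hxi0⟩ := Nat.find_spec hrep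
  rw [← hj0def] at hj0pos hi0lt hxi0
  have hinj : ∀ a b, a < b → b < j0 → x a ≠ x b := by
    intro a b hab hbj hxab
    exact Nat.find_min hrep hbj ⟨by omega, a, hab, hxab⟩
  have hi00 : i0 = 0 := by
    by_contra h0
    obtain ⟨m, rfl⟩ : ∃ m, i0 = m + 1 := ⟨i0 - 1, by omega⟩
    obtain ⟨l, hl⟩ : ∃ l, j0 = l + 1 := ⟨j0 - 1, by omega⟩
    have hja : j0 ≠ m + 2 := by
      intro h
      exact (hadj (m + 1)).ne (by rw [← h]; exact hxi0)
    have hjb : j0 ≠ m + 3 := by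
      intro h
      exact hstep2 (m + 1) (by rw [← h]; exact hxi0.symm)
    have hl3 : m + 3 ≤ l := by omega
    have hmem : x l ∈ D.neighborSet (x (m + 1)) := by
      rw [hxi0, hl]
      exact (hadj l).symm
    rw [hNbr m] at hmem
    simp only [Set.mem_insert_iff, Set.mem_singleton_iff] at hmem
    rcases hmem with h | h
    · exact hinj m l (by omega) (by omega) h.symm
    · exact hinj (m + 2) l (by omega) (by omega) h.symm
  rw [hi00] at hxi0 hi0lt
  have hxj : x j0 = v := hxi0.symm
  have hj1 : j0 ≠ 1 := by
    intro h
    rw [h, hx1] at hxj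
    exact hvw.ne' hxj
  have hj2 : j0 ≠ 2 := by
    intro h
    rw [h] at hxi0
    exact hstep2 0 (by simpa using hxi0.symm)
  have hj3 : 3 ≤ j0 := by omega
  have hcirc : ∀ a b, a < b → b ≤ j0 → x a = x b → a = 0 ∧ b = j0 := by
    intro a b hab hbj hxab
    rcases lt_or_eq_of_le hbj with h | rfl
    · exact absurd hxab (hinj a b hab h)
    · constructor
      · by_contra ha0
        exact hinj 0 a (by omega) (by omega) (by rw [hx0, ← hxj, ← hxab])
      · rfl
  have hxinj' : ∀ a b, a < j0 → b < j0 → x a = x b → a = b := by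
    intro a b ha hb h
    rcases lt_trichotomy a b with h' | h' | h'
    · exact absurd h (hinj a b h' hb)
    · exact h'
    · exact absurd h.symm (hinj b a h' ha)
  -- build the cycle walk
  have hwalk : ∀ n, ∃ q : D.Walk (x 0) (x n),
      q.support = (List.range (n + 1)).map x ∧
      q.edges = (List.range n).map (fun i => s(x i, x (i + 1))) ∧ q.length = n := by
    intro n
    induction n with
    | zero => exact ⟨SimpleGraph.Walk.nil, by simp [List.range_succ], by simp, by simp⟩
    | succ n ih =>
      obtain ⟨q, hs, he, hlen⟩ := ih
      refine ⟨q.concat (hadj n), ?_, ?_, ?_⟩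
      · rw [SimpleGraph.Walk.support_concat, hs, List.range_succ]
        simp [List.range_succ]
      · rw [SimpleGraph.Walk.edges_concat, he, List.range_succ]
        simp
      · rw [SimpleGraph.Walk.length_concat, hlen]
  obtain ⟨q, hqs, hqe, hql⟩ := hwalk j0
  set Q : D.Walk v v := q.copy hx0 hxj with hQdef
  have hQs : Q.support = (List.range (j0 + 1)).map x := by
    rw [hQdef, SimpleGraph.Walk.support_copy, hqs]
  have hQe : Q.edges = (List.range j0).map (fun i => s(x i, x (i + 1))) := by
    rw [hQdef, SimpleGraph.Walk.edges_copy, hqe]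
  have hQl : Q.length = j0 := by
    rw [hQdef, SimpleGraph.Walk.length_copy, hql]
  have hQenodup : Q.edges.Nodup := by
    rw [hQe]
    refine List.Nodup.map_on ?_ List.nodup_range
    intro a ha b hb h
    rw [List.mem_range] at ha hb
    rcases Sym2.eq_iff.mp h with ⟨h1, h2⟩ | ⟨h1, h2⟩
    · exact hxinj' a b ha hb h1
    · rcases lt_or_eq_of_le (Nat.succ_le_of_lt hb) with hb1 | hb1
      · have ha' : a = b + 1 := hxinj' a (b + 1) ha hb1 h1
        have h2' : x (b + 1 + 1) = x b := by rw [← ha']; exact h2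
        exact (hstep2 b h2').elim
      · have ha0 : a = 0 := by
          refine hxinj' a 0 ha (by omega) ?_
          rw [hx0, ← hxj, ← hb1, h1]
        subst ha0
        have : b = 1 := (hxinj' 1 b (by omega) hb h2).symm
        omega
  have hQsupnodup : Q.support.tail.Nodup := by
    rw [hQs, List.range_succ_eq_map, List.map_cons, List.tail_cons, List.map_map]
    refine List.Nodup.map_on ?_ List.nodup_range
    intro a ha b hb h
    rw [List.mem_range] at ha hb
    simp only [Function.comp_apply] at h
    rcases lt_trichotomy a b with h' | h' | h'
    · exact absurd (hcirc (a + 1) (b + 1) (by omega) (by omega) h).1 (by omega)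
    · exact h'
    · exact absurd (hcirc (b + 1) (a + 1) (by omega) (by omega) h.symm).1 (by omega)
  have hQne : Q ≠ SimpleGraph.Walk.nil := by
    intro h
    have : Q.length = 0 := by rw [h, SimpleGraph.Walk.length_nil]
    omega
  have hQcyc : Q.IsCycle := ⟨⟨⟨hQenodup⟩, hQne⟩, hQsupnodup⟩
  set QG : G.Walk v v := Q.mapLe hDG with hQGdef
  have hQGcyc : QG.IsCycle := hQcyc.mapLe hDG
  have hQGl : QG.length = j0 := by
    rw [hQGdef]
    show (Q.map _).length = j0
    rw [SimpleGraph.Walk.length_map, hQl]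
  obtain ⟨u, p, hp, hpodd⟩ := hodd
  obtain ⟨c, _, hcu⟩ := huni
  have h1 := hcu {e | e ∈ QG.edges} ⟨v, QG, hQGcyc, rfl⟩
  have h2 := hcu {e | e ∈ p.edges} ⟨u, p, hp, rfl⟩
  have hset : {e | e ∈ QG.edges} = {e | e ∈ p.edges} := h1.trans h2.symm
  have aux : ∀ (l : List (Sym2 V)), l.Nodup → {e | e ∈ l}.ncard = l.length := by
    intro l hl
    have h : {e | e ∈ l} = ↑l.toFinset := by ext e; simp
    rw [h, Set.ncard_coe_finset, List.toFinset_card_of_nodup hl]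
  have hjodd : Odd j0 := by
    have e1 : {e | e ∈ QG.edges}.ncard = j0 := by
      rw [aux _ hQGcyc.isCircuit.isTrail.edges_nodup,
        SimpleGraph.Walk.length_edges, hQGl]
    have e2 : {e | e ∈ p.edges}.ncard = p.length := by
      rw [aux _ hp.isCircuit.isTrail.edges_nodup, SimpleGraph.Walk.length_edges]
    rw [← e1, hset, e2]
    exact hpodd
  -- parity argument
  have halt : ∀ n, M.Adj (x (n + 1)) (x (n + 2)) ↔ ¬ M.Adj (x (n + 1)) (x n) := by
    intro n
    have := hAlt (hstep2 n) (hadj (n + 1)) (hadj n).symm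
    simpa using this
  have hpar : ∀ n, M.Adj (x n) (x (n + 1)) ↔ (Even n ↔ M.Adj v w) := by
    intro n
    induction n with
    | zero =>
      show M.Adj (x 0) (x 1) ↔ (Even 0 ↔ M.Adj v w)
      rw [hx0, hx1]
      have h0 : Even 0 := Even.zero
      exact ⟨fun h => ⟨fun _ => h, fun _ => h0⟩, fun h => h.mp h0⟩
    | succ n ih =>
      show M.Adj (x (n + 1)) (x (n + 2)) ↔ (Even (n + 1) ↔ M.Adj v w)
      rw [halt n, SimpleGraph.Subgraph.adj_comm, ih, Nat.even_add_one, not_iff]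
  obtain ⟨l, hl⟩ : ∃ l, j0 = l + 1 := ⟨j0 - 1, by omega⟩
  have hxl1 : x (l + 1) = v := by rw [← hl, hxj]
  have hlw : x l ≠ w := by
    rw [← hx1]
    exact fun h => hinj 1 l (by omega) (by omega) h.symm
  have hvl : D.Adj v (x l) := by
    rw [← hxl1]
    exact (hadj l).symm
  have hfin := hAlt hlw hvl hvw
  simp only [SimpleGraph.Subgraph.spanningCoe_adj] at hfin
  have hEvenl : Even l := by
    rcases hjodd with ⟨k, hk⟩
    exact ⟨k, by omega⟩
  have hbl : M.Adj (x l) (x (l + 1)) ↔ M.Adj v w := by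
    rw [hpar l]
    tauto
  rw [hxl1, SimpleGraph.Subgraph.adj_comm] at hbl
  rw [hbl] at hfin
  exact (iff_not_self hfin).elim
end

section
/- Every nonempty forest with a perfect matching has a leaf a whose pendant edge belongs to the (unique) perfect matching, and removing a together with its neighbor yields a forest with a perfect matching. -/
open SimpleGraph

attribute [local instance] Classical.propDecidable

variable {V : Type*}

lemma my_exists_leaf (G : SimpleGraph V) [Fintype V] (hforest : G.IsAcyclic)
    {x y : V} (hxy : G.Adj x y) : ∃ a b, ∀ u, G.Adj a u ↔ u = b := by
  classical
  set S : Set ℕ := {n | ∃ (u v : V) (p : G.Walk u v), p.IsPath ∧ p.length = n} with hS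
  have hbdd : BddAbove S := by
    refine ⟨Fintype.card V, fun n hn => ?_⟩
    obtain ⟨u, v, p, hp, rfl⟩ := hn
    exact le_of_lt hp.length_lt
  have h1 : 1 ∈ S := ⟨x, y, Walk.cons hxy Walk.nil, by simp [hxy.ne], by simp⟩
  have hne : S.Nonempty := ⟨1, h1⟩
  have hmem := Nat.sSup_mem hne hbdd
  obtain ⟨u, v, p, hp, hlen⟩ := hmem
  have hge : 1 ≤ sSup S := le_csSup hbdd h1
  -- p is nonempty
  cases p with
  | nil => simp at hlen; omega
  | cons hb q =>
    rename_i b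
    refine ⟨u, b, fun w => ⟨fun hw => ?_, fun hw => hw ▸ hb⟩⟩
    by_cases hws : w ∈ (Walk.cons hb q).support
    · -- w on the path; use path uniqueness
      have hwu : w ≠ u := fun h => G.loopless.irrefl u (h ▸ hw)
      have hwq : w ∈ q.support := by
        simpa [hwu] using hws
      by_contra hneq
      have hqp : q.IsPath := hp.of_cons
      have hup : u ∉ q.support := by
        have := hp
        rw [Walk.cons_isPath_iff] at this
        exact this.2
      have heqw : (Walk.cons hw Walk.nil : G.Walk u w) = Walk.cons hb (q.takeUntil w hwq) :=
        congrArg Subtype.val (hforest.path_unique ⟨Walk.cons hw Walk.nil, by simp [hw.ne]⟩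
          ⟨Walk.cons hb (q.takeUntil w hwq), by
            rw [Walk.cons_isPath_iff]
            exact ⟨hqp.takeUntil hwq, fun h => hup (q.support_takeUntil_subset hwq h)⟩⟩)
      have hlen1 := congrArg Walk.length heqw
      simp only [Walk.length_cons, Walk.length_nil] at hlen1
      have : (q.takeUntil w hwq).length = 0 := by omega
      have := Walk.eq_of_length_eq_zero this
      exact hneq this.symm
    · -- extend the path: contradiction with maximality
      exfalso
      have : (Walk.cons hb q).length + 1 ∈ S :=
        ⟨w, v, Walk.cons hw.symm (Walk.cons hb q), by
          rw [Walk.cons_isPath_iff]; exact ⟨hp, hws⟩, by simp⟩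
      have := le_csSup hbdd this
      omega

theorem stmt15 (G : SimpleGraph V) [Fintype V] [Nonempty V] (hforest : G.IsAcyclic)
    (M : G.Subgraph) (hM : M.IsPerfectMatching) :
    ∃ a b, (∀ u, G.Adj a u ↔ u = b) ∧ M.Adj a b ∧
      (G.induce ({a, b}ᶜ : Set V)).IsAcyclic ∧
      ∃ M' : (G.induce ({a, b}ᶜ : Set V)).Subgraph, M'.IsPerfectMatching := by
  classical
  have hpm := (Subgraph.isPerfectMatching_iff (M := M)).mp hM
  obtain ⟨v0⟩ := ‹Nonempty V›
  obtain ⟨w0, hw0, -⟩ := hpm v0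
  obtain ⟨a, b, hab⟩ := my_exists_leaf G hforest (M.adj_sub hw0)
  refine ⟨a, b, hab, ?_, ?_, ?_⟩
  · obtain ⟨w, hw, -⟩ := hpm a
    have := (hab w).mp (M.adj_sub hw)
    rwa [this] at hw
  · intro v c hc
    have hinj : Function.Injective (Embedding.induce ({a, b}ᶜ : Set V) : G.induce _ ↪g G) :=
      (Embedding.induce _).injective
    exact hforest (c.map (Embedding.induce _).toHom) (hc.map hinj)
  · have hMab : M.Adj a b := by
      obtain ⟨w, hw, -⟩ := hpm a
      have := (hab w).mp (M.adj_sub hw)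
      rwa [this] at hw
    refine ⟨⟨Set.univ, fun x y => M.Adj x y, fun h => M.adj_sub h, fun _ => Set.mem_univ _,
      ⟨fun x y h => h.symm⟩⟩, ?_⟩
    rw [Subgraph.isPerfectMatching_iff]
    rintro ⟨x, hx⟩
    obtain ⟨w, hw, huniq⟩ := hpm x
    simp only [Set.mem_compl_iff, Set.mem_insert_iff, Set.mem_singleton_iff, not_or] at hx
    have hwa : w ≠ a := by
      intro he
      have := (hab x).mp (M.adj_sub (he ▸ hw.symm : M.Adj a x))
      exact hx.2 this
    have hwb : w ≠ b := by
      intro he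
      obtain ⟨z, hz, huniqb⟩ := hpm b
      have h1 := huniqb x (he ▸ hw.symm : M.Adj b x)
      have h2 := huniqb a hMab.symm
      exact hx.1 (h1.trans h2.symm)
    refine ⟨⟨w, by simp [hwa, hwb]⟩, hw, ?_⟩
    rintro ⟨y, hy⟩ hadj
    exact Subtype.ext (huniq y hadj)
end

section
/- If G is a König-Egerváry graph with a unique perfect matching M and S is a maximum independent set, then |M| = |S| = α(G) = μ(G) and every edge of M joins a vertex of S to a vertex of V(G) - S, with each vertex of V(G) - S matched to exactly one vertex of S. -/
open SimpleGraph

attribute [local instance] Classical.propDecidable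

variable {V : Type*}

/-- In a matching, the number of vertices is twice the number of edges. -/
lemma aux_matching_verts_ncard {G : SimpleGraph V} [Fintype V] {M : G.Subgraph}
    (hM : M.IsMatching) : M.verts.ncard = 2 * M.edgeSet.ncard := by
  classical
  set p : ∀ v, v ∈ M.verts → V := fun v hv => (hM hv).choose with hp
  have hpadj : ∀ v (hv : v ∈ M.verts), M.Adj v (p v hv) := fun v hv => (hM hv).choose_spec.1
  have hpuniq : ∀ v (hv : v ∈ M.verts) w, M.Adj v w → w = p v hv :=
    fun v hv w hw => (hM hv).choose_spec.2 w hw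
  set f : V → Sym2 V := fun v => if hv : v ∈ M.verts then s(v, p v hv) else s(v, v) with hf
  have hmap : ∀ v ∈ M.verts.toFinset, f v ∈ M.edgeSet.toFinset := by
    intro v hv
    rw [Set.mem_toFinset] at hv ⊢
    simp only [hf, dif_pos hv]
    exact hpadj v hv
  rw [Set.ncard_eq_toFinset_card', Set.ncard_eq_toFinset_card',
    Finset.card_eq_sum_card_fiberwise hmap]
  have hfib : ∀ e ∈ M.edgeSet.toFinset,
      (M.verts.toFinset.filter fun v => f v = e).card = 2 := by
    intro e
    induction e using Sym2.ind with
    | _ a b =>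
      intro he
      rw [Set.mem_toFinset, Subgraph.mem_edgeSet] at he
      have hab : a ≠ b := (M.adj_sub he).ne
      have hset : (M.verts.toFinset.filter fun v => f v = s(a, b)) = {a, b} := by
        ext v
        simp only [Finset.mem_filter, Set.mem_toFinset, Finset.mem_insert, Finset.mem_singleton]
        constructor
        · rintro ⟨hv, hfv⟩
          simp only [hf, dif_pos hv] at hfv
          rw [Sym2.eq_iff] at hfv
          rcases hfv with ⟨h1, _⟩ | ⟨h1, _⟩
          · exact Or.inl h1
          · exact Or.inr h1
        · rintro (rfl | rfl)
          · have hv : v ∈ M.verts := M.edge_vert he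
            refine ⟨hv, ?_⟩
            simp only [hf, dif_pos hv]
            rw [← hpuniq v hv b he]
          · have hv : v ∈ M.verts := M.edge_vert he.symm
            refine ⟨hv, ?_⟩
            simp only [hf, dif_pos hv]
            rw [← hpuniq v hv a he.symm, Sym2.eq_swap]
      rw [hset, Finset.card_insert_of_notMem (by simp [hab]), Finset.card_singleton]
  rw [Finset.sum_congr rfl hfib, Finset.sum_const, smul_eq_mul, mul_comm]

theorem stmt18 (G : SimpleGraph V) [Fintype V] (hKE : KonigEgervary G)
    (M : G.Subgraph) (hM : M.IsPerfectMatching)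
    (huniq : ∀ M' : G.Subgraph, M'.IsPerfectMatching → M' = M)
    (S : Finset V) (hS : IsMaxIndepSet G S) :
    M.edgeSet.ncard = S.card ∧ S.card = _root_.indepNum G ∧ _root_.indepNum G = matchNum G ∧
    (∀ e ∈ M.edgeSet, ∃ a b, e = s(a, b) ∧ a ∈ S ∧ b ∉ S) ∧
    (∀ b, b ∉ S → ∃! a, a ∈ S ∧ M.Adj b a) := by
  classical
  -- partner function
  set p : V → V := fun v => (hM.1 (hM.2 v)).choose with hpdef
  have hpadj : ∀ v, M.Adj v (p v) := fun v => (hM.1 (hM.2 v)).choose_spec.1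
  have hpuniq : ∀ v w, M.Adj v w → w = p v := fun v w hw => (hM.1 (hM.2 v)).choose_spec.2 w hw
  have hn : Fintype.card V = 2 * M.edgeSet.ncard := by
    have := aux_matching_verts_ncard hM.1
    rwa [hM.2.verts_eq_univ, Set.ncard_univ, Nat.card_eq_fintype_card] at this
  -- the matching number equals the number of edges of M
  have hub : ∀ k ∈ {n | ∃ M' : G.Subgraph, M'.IsMatching ∧ M'.edgeSet.ncard = n},
      k ≤ M.edgeSet.ncard := by
    rintro k ⟨M', hM', rfl⟩
    have h1 := aux_matching_verts_ncard hM'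
    have h2 : M'.verts.ncard ≤ Fintype.card V := by
      have := Set.ncard_le_ncard (Set.subset_univ M'.verts) Set.finite_univ
      rwa [Set.ncard_univ, Nat.card_eq_fintype_card] at this
    omega
  have hmem : M.edgeSet.ncard ∈
      {n | ∃ M' : G.Subgraph, M'.IsMatching ∧ M'.edgeSet.ncard = n} := ⟨M, hM.1, rfl⟩
  have hmu : matchNum G = M.edgeSet.ncard :=
    le_antisymm (csSup_le ⟨_, hmem⟩ hub) (le_csSup ⟨_, hub⟩ hmem)
  -- injection of S into the edges of M
  set f : V → Sym2 V := fun v => s(v, p v) with hfdef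
  have hmap : ∀ a ∈ S, f a ∈ M.edgeSet.toFinset := by
    intro a _
    rw [Set.mem_toFinset]
    exact hpadj a
  have hinj : ∀ a ∈ S, ∀ b ∈ S, f a = f b → a = b := by
    intro a ha b hb hfab
    simp only [hfdef, Sym2.eq_iff] at hfab
    rcases hfab with ⟨h1, _⟩ | ⟨h1, _⟩
    · exact h1
    · subst h1
      exact absurd (G.adj_symm (M.adj_sub (hpadj b))) (hS.1 ha hb)
  have hcardle : S.card ≤ M.edgeSet.toFinset.card :=
    Finset.card_le_card_of_injOn f hmap hinj
  rw [← Set.ncard_eq_toFinset_card'] at hcardle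
  -- with König–Egerváry we get all equal
  have hKE' : _root_.indepNum G + matchNum G = Fintype.card V := hKE
  have hSα : S.card = _root_.indepNum G := hS.2
  have hcard : M.edgeSet.ncard = S.card := by omega
  -- surjectivity of f from S onto edges
  have hsurj : ∀ e ∈ M.edgeSet, ∃ a, a ∈ S ∧ e = f a := by
    intro e he
    have he' : e ∈ M.edgeSet.toFinset := Set.mem_toFinset.mpr he
    have hle : M.edgeSet.toFinset.card ≤ S.card := by
      rw [← Set.ncard_eq_toFinset_card', hcard]
    obtain ⟨a, ha, hae⟩ := Finset.surj_on_of_inj_on_of_card_le (fun a _ => f a)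
      hmap (fun a b ha hb => hinj a ha b hb) hle e he'
    exact ⟨a, ha, hae⟩
  have hedge : ∀ e ∈ M.edgeSet, ∃ a b, e = s(a, b) ∧ a ∈ S ∧ b ∉ S := by
    intro e he
    obtain ⟨a, haS, rfl⟩ := hsurj e he
    refine ⟨a, p a, rfl, haS, fun hpa => ?_⟩
    exact hS.1 haS hpa (M.adj_sub (hpadj a))
  refine ⟨hcard, hSα, by omega, hedge, ?_⟩
  intro b hb
  obtain ⟨x, y, hxy, hxS, hyS⟩ := hedge s(b, p b) (hpadj b)
  rw [Sym2.eq_iff] at hxy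
  have hpbS : p b ∈ S := by
    rcases hxy with ⟨rfl, rfl⟩ | ⟨rfl, rfl⟩
    · exact absurd hxS hb
    · exact hxS
  exact ⟨p b, ⟨hpbS, hpadj b⟩, fun a' ha' => hpuniq b a' ha'.2⟩
end
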